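/- arXiv:1310.4114 — 5 statements merged into one kernel-verified Lean document; each statement's English description precedes it below -/
import Mathlib

section
/- Let K be an algebraically closed field equipped with a nontrivial non-archimedean absolute value |·|, let a be a coefficient tuple over K, and let Z ⊆ ℙ^N(K) be an arbitrary subset. Then: (1) λ(f_a(Z)) ≤ d·max{B(f_a), λ(Z)} (as elements of [0,∞], where f_a(Z) is the image of Z under f_a); and (2) if λ(Z) > B(f_a), then λ(f_a(Z)) = d·λ(Z). -/
open MvPolynomial Filter Topology
open scoped ENNReal

noncomputable section

/-- Multi-indices `I = (I_0, …, I_N)` of nonnegative integers with `|I| = d` and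
`0 < I_N < d` (the set `Ind*(N,d)`). -/
abbrev MIdx (N d : ℕ) : Type :=
  {I : Fin (N + 1) → Fin (d + 1) //
    (∑ j, (I j : ℕ)) = d ∧ 0 < (I (Fin.last N) : ℕ) ∧ (I (Fin.last N) : ℕ) < d}

/-- A coefficient tuple `a = (a_{i,I})` for `0 ≤ i < N` and `I ∈ Ind*(N,d)`. -/
abbrev Coeffs (N d : ℕ) (K : Type*) : Type _ := Fin N → MIdx N d → K

variable {K : Type*} [Field K]

/-- The homogeneous coordinate forms of the monic polynomial endomorphism `f_a`:
`f_i = x_i^d + ∑_{I} a_{i,I} x^I` for `i < N`, and `f_N = x_N^d`. -/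
def fPoly (N d : ℕ) (a : Coeffs N d K) (i : Fin (N + 1)) : MvPolynomial (Fin (N + 1)) K :=
  if h : (i : ℕ) < N then
    X i ^ d + ∑ I : MIdx N d, C (a ⟨(i : ℕ), h⟩ I) * ∏ t, X t ^ (I.1 t : ℕ)
  else X i ^ d

/-- `f_a` on homogeneous coordinate vectors. -/
def Fvec (N d : ℕ) (a : Coeffs N d K) (x : Fin (N + 1) → K) : Fin (N + 1) → K :=
  fun i => eval x (fPoly N d a i)

/-- The Jacobian form `J_{f_a} = det(∂f_i/∂x_j)_{0 ≤ i,j ≤ N-1}`. -/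
def Jpoly (N d : ℕ) (a : Coeffs N d K) : MvPolynomial (Fin (N + 1)) K :=
  (Matrix.of fun i j : Fin N =>
    pderiv (Fin.castSucc j) (fPoly N d a (Fin.castSucc i))).det

/-- The critical locus `C_{f_a} ⊆ ℙ^N(K)`. -/
def critLocus (N d : ℕ) (a : Coeffs N d K) : Set (Projectivization K (Fin (N + 1) → K)) :=
  {P | ∃ (x : Fin (N + 1) → K) (hx : x ≠ 0),
        eval x (Jpoly N d a) = 0 ∧ P = Projectivization.mk K x hx}

/-- Image of a subset of `ℙ^N(K)` under the projective map induced by a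
homogeneous polynomial map `F` on coordinates. -/
def imSet {K : Type*} [Field K] (N : ℕ) (F : (Fin (N + 1) → K) → (Fin (N + 1) → K))
    (S : Set (Projectivization K (Fin (N + 1) → K))) :
    Set (Projectivization K (Fin (N + 1) → K)) :=
  {Q | ∃ (x : Fin (N + 1) → K) (hx : x ≠ 0) (hFx : F x ≠ 0),
        Projectivization.mk K x hx ∈ S ∧ Q = Projectivization.mk K (F x) hFx}

/-- `f_a^n(C_{f_a})`, the image of the critical locus under the `n`-th iterate. -/
def critImage (N d : ℕ) (a : Coeffs N d K) (n : ℕ) :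
    Set (Projectivization K (Fin (N + 1) → K)) :=
  (imSet N (Fvec N d a))^[n] (critLocus N d a)

/-- `f_a` is post-critically finite: the sets `f_a^n(C_{f_a})` take only finitely
many distinct values. -/
def IsPCF (N d : ℕ) (a : Coeffs N d K) : Prop :=
  (Set.range fun n => critImage N d a n).Finite

/-- `λ(Z) = log⁺ sup {|β_N|⁻¹ : |β_0| = ⋯ = |β_{N-1}| = 1, β_N ≠ 0, [β] ∈ Z} ∈ [0,∞]`,
with `sup ∅ = 0`. -/
def lam (N : ℕ) (v : AbsoluteValue K ℝ)
    (Z : Set (Projectivization K (Fin (N + 1) → K))) : ℝ≥0∞ :=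
  ⨆ (β : Fin (N + 1) → K) (hβ : β ≠ 0)
    (_ : ∀ j : Fin N, v (β (Fin.castSucc j)) = 1)
    (_ : β (Fin.last N) ≠ 0)
    (_ : Projectivization.mk K β hβ ∈ Z),
    ENNReal.ofReal (Real.log ((v (β (Fin.last N)))⁻¹))

/-- `B(f_a) = log⁺ max_{i,I} |a_{i,I}|^{1/I_N}`. -/
def Bnorm (N d : ℕ) (v : AbsoluteValue K ℝ) (a : Coeffs N d K) : ℝ :=
  max 0 (⨆ (i : Fin N) (I : MIdx N d),
    Real.log (v (a i I) ^ ((((I.1 (Fin.last N) : ℕ)) : ℝ))⁻¹))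


section Helpers

variable {N d : ℕ}

lemma Fvec_last (a : Coeffs N d K) (x : Fin (N+1) → K) :
    Fvec N d a x (Fin.last N) = x (Fin.last N) ^ d := by
  simp [Fvec, fPoly]

lemma Fvec_castSucc (a : Coeffs N d K) (i : Fin N) (x : Fin (N+1) → K) :
    Fvec N d a x (Fin.castSucc i)
      = x (Fin.castSucc i) ^ d + ∑ I : MIdx N d, a i I * ∏ s, x s ^ (I.1 s : ℕ) := by
  have h : ((Fin.castSucc i : Fin (N+1)) : ℕ) < N := by simp [Fin.coe_castSucc, i.isLt]
  simp only [Fvec, fPoly, dif_pos h]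
  simp [Fin.eta]

lemma Fvec_smul (a : Coeffs N d K) (c : K) (x : Fin (N+1) → K) :
    Fvec N d a (c • x) = c ^ d • Fvec N d a x := by
  funext i
  induction i using Fin.lastCases with
  | last => simp [Fvec_last, mul_pow]
  | cast j =>
    simp only [Fvec_castSucc, Pi.smul_apply, smul_eq_mul, mul_pow]
    rw [mul_add, Finset.mul_sum]
    congr 1
    refine Finset.sum_congr rfl fun I _ => ?_
    have : ∏ s, c ^ (I.1 s : ℕ) * x s ^ (I.1 s : ℕ) = c ^ d * ∏ s, x s ^ (I.1 s : ℕ) := by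
      rw [Finset.prod_mul_distrib, Finset.prod_pow_eq_pow_sum, I.2.1]
    rw [this]; ring

variable (v : AbsoluteValue K ℝ)

lemma v_sum_le (hna : IsNonarchimedean (v : K → ℝ)) {ι : Type*} (s : Finset ι) (g : ι → K)
    (M : ℝ) (hM : 0 ≤ M) (h : ∀ i ∈ s, v (g i) ≤ M) : v (∑ i ∈ s, g i) ≤ M := by
  classical
  induction s using Finset.induction with
  | empty => simpa using hM
  | @insert b s' hx ih =>
    rw [Finset.sum_insert hx]
    refine le_trans (hna _ _) (max_le (h b (by simp)) (ih fun i hi => h i (by simp [hi])))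

lemma v_add_eq_left (hna : IsNonarchimedean (v : K → ℝ)) {x y : K} (h : v y < v x) :
    v (x + y) = v x := by
  refine le_antisymm (le_trans (hna x y) (by simp [h.le])) ?_
  by_contra hlt
  push_neg at hlt
  have h2 : v x ≤ max (v (x + y)) (v y) := by
    have := hna (x + y) (-y)
    simpa using this
  rcases max_cases (v (x+y)) (v y) with ⟨he, _⟩ | ⟨he, _⟩ <;> rw [he] at h2 <;> linarith

variable (a : Coeffs N d K)

lemma one_le_expB : (1:ℝ) ≤ Real.exp (Bnorm N d v a) := by
  rw [show (1:ℝ) = Real.exp 0 by simp]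
  exact Real.exp_le_exp.mpr (le_max_left _ _)

lemma va_le (i : Fin N) (I : MIdx N d) :
    v (a i I) ≤ Real.exp (Bnorm N d v a) ^ ((I.1 (Fin.last N) : ℕ)) := by
  have hn1 : 1 ≤ (I.1 (Fin.last N) : ℕ) := I.2.2.1
  rcases eq_or_lt_of_le (v.nonneg (a i I)) with h0 | hpos
  · rw [← h0]
    positivity
  · have hlog : Real.log (v (a i I) ^ ((((I.1 (Fin.last N) : ℕ)):ℝ))⁻¹) ≤ Bnorm N d v a := by
      refine le_trans (le_trans
        (le_ciSup (f := fun I' : MIdx N d =>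
            Real.log (v (a i I') ^ ((((I'.1 (Fin.last N) : ℕ)):ℝ))⁻¹))
          (Set.Finite.bddAbove (Set.finite_range _)) I) ?_) (le_max_right _ _)
      exact le_ciSup (f := fun i' : Fin N => ⨆ I' : MIdx N d,
        Real.log (v (a i' I') ^ ((((I'.1 (Fin.last N) : ℕ)):ℝ))⁻¹))
        (Set.Finite.bddAbove (Set.finite_range _)) i
    have hrp : (0:ℝ) < v (a i I) ^ ((((I.1 (Fin.last N) : ℕ)):ℝ))⁻¹ :=
      Real.rpow_pos_of_pos hpos _
    have hle := (Real.log_le_iff_le_exp hrp).mp hlog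
    have h2 := pow_le_pow_left₀ hrp.le hle (I.1 (Fin.last N) : ℕ)
    rwa [← Real.rpow_natCast (v (a i I) ^ ((((I.1 (Fin.last N) : ℕ)):ℝ))⁻¹),
      ← Real.rpow_mul (v.nonneg _),
      inv_mul_cancel₀ (by exact_mod_cast Nat.one_le_iff_ne_zero.mp hn1),
      Real.rpow_one] at h2

lemma prod_bound (I : MIdx N d) (x : Fin (N+1) → K) (m t : ℝ) (hm : 0 ≤ m) (ht0 : 0 ≤ t)
    (hj : ∀ j : Fin N, v (x (Fin.castSucc j)) ≤ m) (htN : v (x (Fin.last N)) ≤ t) :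
    v (∏ s, x s ^ (I.1 s : ℕ)) ≤
      m ^ (d - (I.1 (Fin.last N) : ℕ)) * t ^ (I.1 (Fin.last N) : ℕ) := by
  have hsum : ∑ j : Fin N, (I.1 (Fin.castSucc j) : ℕ) = d - (I.1 (Fin.last N) : ℕ) := by
    have := I.2.1
    rw [Fin.sum_univ_castSucc] at this
    omega
  rw [map_prod, Fin.prod_univ_castSucc]
  have h1 : ∏ j : Fin N, v (x (Fin.castSucc j) ^ (I.1 (Fin.castSucc j) : ℕ))
      ≤ m ^ (d - (I.1 (Fin.last N) : ℕ)) := by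
    rw [← hsum, ← Finset.prod_pow_eq_pow_sum]
    refine Finset.prod_le_prod (fun j _ => by positivity) (fun j _ => ?_)
    rw [map_pow]
    exact pow_le_pow_left₀ (v.nonneg _) (hj j) _
  have h2 : v (x (Fin.last N) ^ (I.1 (Fin.last N) : ℕ)) ≤ t ^ (I.1 (Fin.last N) : ℕ) := by
    rw [map_pow]
    exact pow_le_pow_left₀ (v.nonneg _) htN _
  exact mul_le_mul h1 h2 (by positivity) (by positivity)

lemma vS_le (hna : IsNonarchimedean (v : K → ℝ)) (i : Fin N) (x : Fin (N+1) → K) (m t : ℝ)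
    (hm : 0 ≤ m) (ht0 : 0 ≤ t)
    (hj : ∀ j : Fin N, v (x (Fin.castSucc j)) ≤ m) (htN : v (x (Fin.last N)) ≤ t)
    (hbtm : Real.exp (Bnorm N d v a) * t ≤ m) :
    v (∑ I : MIdx N d, a i I * ∏ s, x s ^ (I.1 s : ℕ)) ≤
      (Real.exp (Bnorm N d v a) * t) * m ^ (d - 1) := by
  set b := Real.exp (Bnorm N d v a) with hb
  have hb0 : (0:ℝ) < b := Real.exp_pos _
  refine v_sum_le v hna _ _ _ (by positivity) (fun I _ => ?_)
  set n : ℕ := (I.1 (Fin.last N) : ℕ) with hn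
  have hn1 : 1 ≤ n := I.2.2.1
  have hnd : n ≤ d := le_of_lt I.2.2.2
  rw [map_mul]
  have h1 : v (a i I) * v (∏ s, x s ^ (I.1 s : ℕ)) ≤ b ^ n * (m ^ (d - n) * t ^ n) :=
    mul_le_mul (va_le v a i I) (prod_bound v I x m t hm ht0 hj htN)
      (v.nonneg _) (by positivity)
  refine le_trans h1 ?_
  have e1 : b ^ n * (m ^ (d - n) * t ^ n) = m ^ (d - n) * (b * t) ^ n := by
    rw [mul_pow]; ring
  have e2 : (b * t) ^ n ≤ (b * t) * m ^ (n - 1) := by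
    have hrw : (b * t) ^ n = (b * t) * (b * t) ^ (n - 1) := by
      rw [← pow_succ']
      congr 1
      omega
    rw [hrw]
    exact mul_le_mul_of_nonneg_left (pow_le_pow_left₀ (by positivity) hbtm _) (by positivity)
  rw [e1]
  calc m ^ (d - n) * (b * t) ^ n ≤ m ^ (d - n) * ((b * t) * m ^ (n - 1)) :=
        mul_le_mul_of_nonneg_left e2 (by positivity)
    _ = (b * t) * m ^ (d - 1) := by
        rw [show d - 1 = (d - n) + (n - 1) by omega, pow_add]; ring

lemma pow_eq_one_imp {r : ℝ} (hr : 0 ≤ r) (hd : d ≠ 0) (h : r ^ d = 1) : r = 1 := by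
  rcases lt_trichotomy r 1 with h1 | h1 | h1
  · have := pow_lt_one₀ hr h1 hd
    rw [h] at this; linarith
  · exact h1
  · have := one_lt_pow₀ h1 hd
    rw [h] at this; linarith

lemma coords_eq_one (hna : IsNonarchimedean (v : K → ℝ)) (hN : 1 ≤ N) (hd : 2 ≤ d)
    (x : Fin (N+1) → K)
    (hF : ∀ i : Fin N, v (Fvec N d a x (Fin.castSucc i)) = 1)
    (htb : Real.exp (Bnorm N d v a) * v (x (Fin.last N)) < 1) :
    ∀ j : Fin N, v (x (Fin.castSucc j)) = 1 := by
  set b := Real.exp (Bnorm N d v a) with hb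
  set t := v (x (Fin.last N)) with ht
  have hb0 : (0:ℝ) < b := Real.exp_pos _
  have ht0 : (0:ℝ) ≤ t := v.nonneg _
  have hne : (Finset.univ : Finset (Fin N)).Nonempty := by
    refine ⟨⟨0, hN⟩, Finset.mem_univ _⟩
  set m := Finset.univ.sup' hne (fun j : Fin N => v (x (Fin.castSucc j))) with hmdef
  have hjm : ∀ j : Fin N, v (x (Fin.castSucc j)) ≤ m := by
    intro j
    rw [hmdef]
    exact Finset.le_sup' (fun j : Fin N => v (x (Fin.castSucc j))) (Finset.mem_univ j)
  have hm0 : (0:ℝ) ≤ m := le_trans (v.nonneg _) (hjm ⟨0, hN⟩)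
  have hdne : d ≠ 0 := by omega
  have hm1 : m ≤ 1 := by
    by_contra hcon
    push_neg at hcon
    obtain ⟨i, _, hi⟩ := Finset.exists_mem_eq_sup' hne (fun j : Fin N => v (x (Fin.castSucc j)))
    have hS : v (∑ I : MIdx N d, a i I * ∏ s, x s ^ (I.1 s : ℕ)) ≤ (b * t) * m ^ (d - 1) :=
      vS_le v a hna i x m t hm0 ht0 hjm le_rfl (le_trans htb.le hcon.le)
    have hmd : m ^ d = m * m ^ (d - 1) := by
      rw [← pow_succ']; congr 1; omega
    have hSlt : v (∑ I : MIdx N d, a i I * ∏ s, x s ^ (I.1 s : ℕ))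
        < v (x (Fin.castSucc i) ^ d) := by
      rw [map_pow, ← hi, hmd]
      refine lt_of_le_of_lt hS ?_
      exact mul_lt_mul_of_pos_right (lt_trans htb hcon) (by positivity)
    have heq := v_add_eq_left v hna hSlt
    rw [← Fvec_castSucc, hF i, map_pow, ← hi] at heq
    have := one_lt_pow₀ hcon hdne
    rw [← heq] at this; linarith
  intro j
  have hS1 : v (∑ I : MIdx N d, a j I * ∏ s, x s ^ (I.1 s : ℕ)) < 1 := by
    have hS : v (∑ I : MIdx N d, a j I * ∏ s, x s ^ (I.1 s : ℕ)) ≤ (b * t) * 1 ^ (d - 1) :=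
      vS_le v a hna j x 1 t zero_le_one ht0 (fun j' => le_trans (hjm j') hm1) le_rfl htb.le
    simpa using lt_of_le_of_lt (by simpa using hS) htb
  have hone : v (x (Fin.castSucc j) ^ d
      + ∑ I : MIdx N d, a j I * ∏ s, x s ^ (I.1 s : ℕ)) = 1 := by
    rw [← Fvec_castSucc]; exact hF j
  have heq : v (x (Fin.castSucc j) ^ d) = 1 := by
    have h2 := v_add_eq_left v hna (x := x (Fin.castSucc j) ^ d
      + ∑ I : MIdx N d, a j I * ∏ s, x s ^ (I.1 s : ℕ))
      (y := -(∑ I : MIdx N d, a j I * ∏ s, x s ^ (I.1 s : ℕ)))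
      (by rw [hone, v.map_neg]; exact hS1)
    rw [add_neg_cancel_right, hone] at h2
    exact h2
  rw [map_pow] at heq
  exact pow_eq_one_imp (v.nonneg _) hdne heq

lemma F_coords_eq_one (hna : IsNonarchimedean (v : K → ℝ)) (hd : 2 ≤ d)
    (x : Fin (N+1) → K)
    (hj : ∀ j : Fin N, v (x (Fin.castSucc j)) = 1)
    (htb : Real.exp (Bnorm N d v a) * v (x (Fin.last N)) < 1) :
    ∀ i : Fin N, v (Fvec N d a x (Fin.castSucc i)) = 1 := by
  intro i
  set t := v (x (Fin.last N)) with ht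
  have ht0 : (0:ℝ) ≤ t := v.nonneg _
  have hdne : d ≠ 0 := by omega
  have hS1 : v (∑ I : MIdx N d, a i I * ∏ s, x s ^ (I.1 s : ℕ)) < 1 := by
    have hS := vS_le v a hna i x 1 t zero_le_one ht0 (fun j' => (hj j').le) le_rfl htb.le
    simpa using lt_of_le_of_lt (by simpa using hS) htb
  rw [Fvec_castSucc]
  have hx1 : v (x (Fin.castSucc i) ^ d) = 1 := by
    rw [map_pow, hj i, one_pow]
  rw [v_add_eq_left v hna (by rw [hx1]; exact hS1), hx1]

end Helpers

end

/-- Over an algebraically closed field with a nontrivial non-archimedean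
absolute value, for every subset `Z ⊆ ℙ^N(K)`:
(1) `λ(f_a(Z)) ≤ d·max{B(f_a), λ(Z)}`, and
(2) if `λ(Z) > B(f_a)` then `λ(f_a(Z)) = d·λ(Z)`. -/
theorem stmt9 (N d : ℕ) (hN : 1 ≤ N) (hd : 2 ≤ d) (K : Type*) [Field K] [IsAlgClosed K]
    (v : AbsoluteValue K ℝ) (hna : IsNonarchimedean (v : K → ℝ))
    (hnt : ∃ x : K, x ≠ 0 ∧ v x ≠ 1)
    (a : Coeffs N d K) (Z : Set (Projectivization K (Fin (N + 1) → K))) :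
    lam N v (imSet N (Fvec N d a) Z) ≤
      (d : ℝ≥0∞) * max (ENNReal.ofReal (Bnorm N d v a)) (lam N v Z) ∧
    (ENNReal.ofReal (Bnorm N d v a) < lam N v Z →
      lam N v (imSet N (Fvec N d a) Z) = (d : ℝ≥0∞) * lam N v Z) := by
  classical
  have hdne0 : d ≠ 0 := by omega
  have hdE0 : (d:ℝ≥0∞) ≠ 0 := by exact_mod_cast hdne0
  have hdEtop : (d:ℝ≥0∞) ≠ ⊤ := ENNReal.natCast_ne_top d
  set B := Bnorm N d v a with hB
  set b := Real.exp B with hbdef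
  have hb1 : (1:ℝ) ≤ b := one_le_expB v a
  set Lim := lam N v (imSet N (Fvec N d a) Z) with hLim
  have part1 : Lim ≤ (d : ℝ≥0∞) * max (ENNReal.ofReal B) (lam N v Z) := by
    rw [hLim, lam]
    refine iSup_le fun γ => iSup_le fun hγ => iSup_le fun hnorm => iSup_le fun hγN =>
      iSup_le fun hmem => ?_
    obtain ⟨x, hx, hFx, hxZ, hQeq⟩ := hmem
    rw [Projectivization.mk_eq_mk_iff] at hQeq
    obtain ⟨u, hu⟩ := hQeq
    obtain ⟨w, hw⟩ := IsAlgClosed.exists_pow_nat_eq (u : K) (n := d) (by omega)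
    have hw0 : w ≠ 0 := by
      intro h
      exact u.ne_zero (by rw [← hw, h, zero_pow hdne0])
    set y := w • x with hy
    have hFy : Fvec N d a y = γ := by
      rw [hy, Fvec_smul, hw, ← Units.smul_def, hu]
    have hyne : y ≠ 0 := smul_ne_zero hw0 hx
    have hmky : Projectivization.mk K y hyne = Projectivization.mk K x hx := by
      rw [Projectivization.mk_eq_mk_iff]
      exact ⟨Units.mk0 w hw0, rfl⟩
    have hyZ : Projectivization.mk K y hyne ∈ Z := by rw [hmky]; exact hxZ
    have hyN : y (Fin.last N) ≠ 0 := by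
      intro h
      exact hγN (by rw [← hFy, Fvec_last, h, zero_pow hdne0])
    set t := v (y (Fin.last N)) with htdef
    have ht0 : (0:ℝ) < t := v.pos hyN
    have hγlast : v (γ (Fin.last N)) = t ^ d := by
      rw [← hFy, Fvec_last, map_pow]
    have hvalγ : Real.log (v (γ (Fin.last N)))⁻¹ = d * Real.log t⁻¹ := by
      rw [hγlast, ← inv_pow, Real.log_pow]
    rcases le_or_gt 1 (b * t) with hcase | hcase
    · have htinv : t⁻¹ ≤ b := by
        rw [inv_eq_one_div, div_le_iff₀ ht0]
        linarith [hcase]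
      have hlogt : Real.log t⁻¹ ≤ B := by
        calc Real.log t⁻¹ ≤ Real.log b := Real.log_le_log (by positivity) htinv
          _ = B := Real.log_exp B
      have hlog : Real.log (v (γ (Fin.last N)))⁻¹ ≤ d * B := by
        rw [hvalγ]
        exact mul_le_mul_of_nonneg_left hlogt (by positivity)
      calc ENNReal.ofReal (Real.log (v (γ (Fin.last N)))⁻¹)
          ≤ ENNReal.ofReal ((d:ℝ) * B) := ENNReal.ofReal_le_ofReal hlog
        _ = (d:ℝ≥0∞) * ENNReal.ofReal B := by
            rw [ENNReal.ofReal_mul (by positivity)]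
            simp
        _ ≤ (d:ℝ≥0∞) * max (ENNReal.ofReal B) (lam N v Z) :=
            mul_le_mul_right (le_max_left _ _) _
    · have hynorm : ∀ j : Fin N, v (y (Fin.castSucc j)) = 1 :=
        coords_eq_one v a hna hN hd y
          (fun i => by rw [show Fvec N d a y = γ from hFy]; exact hnorm i) hcase
      have hlamZ : ENNReal.ofReal (Real.log t⁻¹) ≤ lam N v Z := by
        rw [lam]
        exact le_iSup_of_le y (le_iSup_of_le hyne (le_iSup_of_le hynorm
          (le_iSup_of_le hyN (le_iSup_of_le hyZ le_rfl))))
      have ht1 : (0:ℝ) ≤ Real.log t⁻¹ := by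
        have htlt : t < 1 := lt_of_lt_of_le (by nlinarith) le_rfl
        have : (1:ℝ) ≤ t⁻¹ := by
          rw [le_inv_comm₀ zero_lt_one ht0]
          simpa using htlt.le
        exact Real.log_nonneg this
      calc ENNReal.ofReal (Real.log (v (γ (Fin.last N)))⁻¹)
          = ENNReal.ofReal ((d:ℝ) * Real.log t⁻¹) := by rw [hvalγ]
        _ = (d:ℝ≥0∞) * ENNReal.ofReal (Real.log t⁻¹) := by
            rw [ENNReal.ofReal_mul (by positivity)]
            simp
        _ ≤ (d:ℝ≥0∞) * lam N v Z := mul_le_mul_right hlamZ _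
        _ ≤ (d:ℝ≥0∞) * max (ENNReal.ofReal B) (lam N v Z) :=
            mul_le_mul_right (le_max_right _ _) _
  refine ⟨part1, fun hBlt => ?_⟩
  refine le_antisymm (le_trans part1 (by rw [max_eq_right hBlt.le])) ?_
  by_contra hcon
  push_neg at hcon
  have hBd : (d:ℝ≥0∞) * ENNReal.ofReal B < (d:ℝ≥0∞) * lam N v Z :=
    (ENNReal.mul_lt_mul_iff_right hdE0 hdEtop).mpr hBlt
  have hlt : max Lim ((d:ℝ≥0∞) * ENNReal.ofReal B) < (d:ℝ≥0∞) * lam N v Z :=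
    max_lt hcon hBd
  rw [lam] at hlt
  simp only [ENNReal.mul_iSup, lt_iSup_iff] at hlt
  obtain ⟨β, hβ, hnormβ, hβN, hmemβ, hval⟩ := hlt
  have hIm : Lim < (d:ℝ≥0∞) * ENNReal.ofReal (Real.log (v (β (Fin.last N)))⁻¹) :=
    lt_of_le_of_lt (le_max_left _ _) hval
  have hB2 : ENNReal.ofReal B < ENNReal.ofReal (Real.log (v (β (Fin.last N)))⁻¹) :=
    (ENNReal.mul_lt_mul_iff_right hdE0 hdEtop).mp (lt_of_le_of_lt (le_max_right _ _) hval)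
  set t := v (β (Fin.last N)) with htdef
  have ht0 : (0:ℝ) < t := v.pos hβN
  have hlogB : B < Real.log t⁻¹ := by
    by_contra h
    push_neg at h
    exact absurd hB2 (not_lt.mpr (ENNReal.ofReal_le_ofReal h))
  have htb : b * t < 1 := by
    have hbt : b < t⁻¹ := by
      calc b = Real.exp B := rfl
        _ < Real.exp (Real.log t⁻¹) := Real.exp_lt_exp.mpr hlogB
        _ = t⁻¹ := Real.exp_log (by positivity)
    calc b * t < t⁻¹ * t := mul_lt_mul_of_pos_right hbt ht0
      _ = 1 := inv_mul_cancel₀ ht0.ne'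
  have hFnorm : ∀ i : Fin N, v (Fvec N d a β (Fin.castSucc i)) = 1 :=
    F_coords_eq_one v a hna hd β hnormβ htb
  have hFβN : Fvec N d a β (Fin.last N) ≠ 0 := by
    rw [Fvec_last]
    exact pow_ne_zero _ hβN
  have hFβ : Fvec N d a β ≠ 0 := fun h => hFβN (by rw [h]; rfl)
  have hmem2 : Projectivization.mk K (Fvec N d a β) hFβ ∈ imSet N (Fvec N d a) Z :=
    ⟨β, hβ, hFβ, hmemβ, rfl⟩
  have hval2 : ENNReal.ofReal (Real.log (v (Fvec N d a β (Fin.last N)))⁻¹)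
      = (d:ℝ≥0∞) * ENNReal.ofReal (Real.log t⁻¹) := by
    rw [Fvec_last, map_pow, ← inv_pow, Real.log_pow, ENNReal.ofReal_mul (by positivity)]
    simp [htdef]
  have hge : (d:ℝ≥0∞) * ENNReal.ofReal (Real.log t⁻¹) ≤ Lim := by
    rw [← hval2, hLim, lam]
    exact le_iSup_of_le (Fvec N d a β) (le_iSup_of_le hFβ (le_iSup_of_le hFnorm
      (le_iSup_of_le hFβN (le_iSup_of_le hmem2 le_rfl))))
  exact absurd (lt_of_lt_of_le hIm hge) (lt_irrefl _)
end

section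
/- Let K be an algebraically closed field equipped with a nontrivial non-archimedean absolute value |·|, and let a be a coefficient tuple over K. For every subset Z ⊆ ℙ^N(K): (1) the limit G(Z) := lim_{n→∞} d^{−n}·λ(f_a^n(Z)) exists in [0,∞]; (2) G(f_a(Z)) = d·G(Z); (3) if λ(Z) > B(f_a), then G(Z) = λ(Z); (4) if λ(Z) < ∞, then G(Z) is finite and |G(Z) − λ(Z)| ≤ 2·B(f_a); and (5) if the sets f_a^n(Z), n ≥ 0, take only finitely many distinct values and λ(f_a^n(Z)) < ∞ for all n, then G(Z) = 0. -/
open MvPolynomial Filter Topology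
open scoped ENNReal

namespace Stmt10Aux

open Real

section NA
variable {K : Type*} [Field K] (v : AbsoluteValue K ℝ)

lemma na_sum (hna : IsNonarchimedean (v : K → ℝ)) {ι : Type*} (s : Finset ι) (g : ι → K) {c : ℝ}
    (hc : 0 ≤ c) (h : ∀ i ∈ s, v (g i) ≤ c) : v (∑ i ∈ s, g i) ≤ c := by
  classical
  induction s using Finset.induction_on with
  | empty => simpa using hc
  | @insert i s his ih =>
    rw [Finset.sum_insert his]
    exact le_trans (hna _ _) (max_le (h i (Finset.mem_insert_self _ _))
      (ih fun j hj => h j (Finset.mem_insert_of_mem hj)))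

lemma na_add_eq (hna : IsNonarchimedean (v : K → ℝ)) {x y : K} (h : v y < v x) :
    v (x + y) = v x := by
  refine le_antisymm (le_trans (hna x y) (max_le le_rfl h.le)) ?_
  have h2 : v x ≤ max (v (x + y)) (v y) := by
    have := hna (x + y) (-y)
    simpa [add_neg_cancel_right] using this
  rcases le_max_iff.mp h2 with h' | h'
  · exact h'
  · exact absurd (lt_of_le_of_lt h' h) (lt_irrefl _)

end NA

section Main

variable (N d : ℕ) {K : Type*} [Field K]
  (v : AbsoluteValue K ℝ) (a : Coeffs N d K)

lemma midx_split (I : MIdx N d) :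
    (∑ j : Fin N, (I.1 (Fin.castSucc j) : ℕ)) + (I.1 (Fin.last N) : ℕ) = d := by
  have := I.2.1
  rwa [Fin.sum_univ_castSucc] at this

lemma midx_exists_pos (I : MIdx N d) : ∃ j : Fin N, 0 < (I.1 (Fin.castSucc j) : ℕ) := by
  by_contra h
  push_neg at h
  have hz : (∑ j : Fin N, (I.1 (Fin.castSucc j) : ℕ)) = 0 :=
    Finset.sum_eq_zero fun j _ => Nat.le_zero.mp (h j)
  have := midx_split N d I
  rw [hz, zero_add] at this
  exact absurd this (Nat.ne_of_lt I.2.2.2)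

lemma Fvec_castSucc (x : Fin (N + 1) → K) (j : Fin N) :
    Fvec N d a x (Fin.castSucc j) =
      x (Fin.castSucc j) ^ d + ∑ I : MIdx N d, a j I * ∏ t, x t ^ (I.1 t : ℕ) := by
  have hj : ((Fin.castSucc j : Fin (N + 1)) : ℕ) < N := by
    simpa using j.isLt
  simp only [Fvec, fPoly, dif_pos hj]
  have : (⟨((Fin.castSucc j : Fin (N + 1)) : ℕ), hj⟩ : Fin N) = j := by
    ext; simp
  rw [this]
  simp [map_add, map_pow, map_sum, map_mul, map_prod]

lemma Fvec_last (x : Fin (N + 1) → K) :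
    Fvec N d a x (Fin.last N) = x (Fin.last N) ^ d := by
  have hj : ¬ ((Fin.last N : Fin (N + 1)) : ℕ) < N := by simp
  simp only [Fvec, fPoly, dif_neg hj]
  simp [map_pow]

lemma Fvec_smul (u : K) (x : Fin (N + 1) → K) :
    Fvec N d a (u • x) = (u ^ d) • Fvec N d a x := by
  funext i
  induction i using Fin.lastCases with
  | last =>
    rw [Pi.smul_apply, Fvec_last, Fvec_last, Pi.smul_apply, smul_eq_mul, smul_eq_mul, mul_pow]
  | cast j =>
    rw [Pi.smul_apply, Fvec_castSucc, Fvec_castSucc, Pi.smul_apply, smul_eq_mul, smul_eq_mul,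
      mul_pow, mul_add]
    congr 1
    rw [Finset.mul_sum]
    refine Finset.sum_congr rfl fun I _ => ?_
    have hprod : (∏ t, (u • x) t ^ (I.1 t : ℕ)) = u ^ d * ∏ t, x t ^ (I.1 t : ℕ) := by
      have : ∀ t, (u • x) t ^ (I.1 t : ℕ) = u ^ (I.1 t : ℕ) * x t ^ (I.1 t : ℕ) := by
        intro t; rw [Pi.smul_apply, smul_eq_mul, mul_pow]
      rw [Finset.prod_congr rfl fun t _ => this t, Finset.prod_mul_distrib,
        Finset.prod_pow_eq_pow_sum, I.2.1]
    rw [hprod]; ring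

end Main
section Key

variable (N d : ℕ) {K : Type*} [Field K]
  (v : AbsoluteValue K ℝ) (a : Coeffs N d K)

lemma Bnorm_nonneg : 0 ≤ Bnorm N d v a := le_max_left _ _

lemma coeff_le (hN : 1 ≤ N) (i : Fin N) (I : MIdx N d) :
    v (a i I) ≤ Real.exp ((I.1 (Fin.last N) : ℕ) * Bnorm N d v a) := by
  set n : ℕ := (I.1 (Fin.last N) : ℕ) with hn
  have hn0 : 0 < n := I.2.2.1
  rcases eq_or_lt_of_le (v.nonneg (a i I)) with h0 | hpos
  · exact le_of_lt (lt_of_le_of_lt h0.symm.le (Real.exp_pos _))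
  · have hb1 : Real.log (v (a i I) ^ ((n : ℝ))⁻¹) ≤
        ⨆ I : MIdx N d, Real.log (v (a i I) ^ ((((I.1 (Fin.last N) : ℕ)) : ℝ))⁻¹) :=
      le_ciSup (f := fun I : MIdx N d =>
        Real.log (v (a i I) ^ ((((I.1 (Fin.last N) : ℕ)) : ℝ))⁻¹))
        (Set.Finite.bddAbove (Set.finite_range _)) I
    have hb2 : (⨆ I : MIdx N d, Real.log (v (a i I) ^ ((((I.1 (Fin.last N) : ℕ)) : ℝ))⁻¹)) ≤
        ⨆ (i : Fin N) (I : MIdx N d),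
          Real.log (v (a i I) ^ ((((I.1 (Fin.last N) : ℕ)) : ℝ))⁻¹) :=
      le_ciSup (f := fun i : Fin N => ⨆ I : MIdx N d,
        Real.log (v (a i I) ^ ((((I.1 (Fin.last N) : ℕ)) : ℝ))⁻¹))
        (Set.Finite.bddAbove (Set.finite_range _)) i
    have hb : Real.log (v (a i I) ^ ((n : ℝ))⁻¹) ≤ Bnorm N d v a :=
      le_trans (le_trans hb1 hb2) (le_max_right _ _)
    rw [Real.log_rpow hpos] at hb
    have hnpos : (0 : ℝ) < (n : ℝ) := by exact_mod_cast hn0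
    rw [inv_mul_le_iff₀ hnpos] at hb
    exact (Real.log_le_iff_le_exp hpos).mp hb

lemma mono_bound (hN : 1 ≤ N) {M : ℝ} (hM : 0 ≤ M) (x : Fin (N + 1) → K)
    (hx : ∀ j : Fin N, v (x (Fin.castSucc j)) ≤ M) (i : Fin N) (I : MIdx N d) :
    v (a i I * ∏ t, x t ^ (I.1 t : ℕ)) ≤
      Real.exp ((I.1 (Fin.last N) : ℕ) * Bnorm N d v a) *
        M ^ (d - (I.1 (Fin.last N) : ℕ)) * (v (x (Fin.last N))) ^ (I.1 (Fin.last N) : ℕ) := by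
  rw [map_mul, map_prod]
  have hsplit : (∏ t, v (x t ^ (I.1 t : ℕ))) =
      (∏ j : Fin N, v (x (Fin.castSucc j)) ^ (I.1 (Fin.castSucc j) : ℕ)) *
        v (x (Fin.last N)) ^ (I.1 (Fin.last N) : ℕ) := by
    rw [Fin.prod_univ_castSucc]
    simp [map_pow]
  rw [hsplit]
  have hprod : (∏ j : Fin N, v (x (Fin.castSucc j)) ^ (I.1 (Fin.castSucc j) : ℕ)) ≤
      M ^ (d - (I.1 (Fin.last N) : ℕ)) := by
    calc (∏ j : Fin N, v (x (Fin.castSucc j)) ^ (I.1 (Fin.castSucc j) : ℕ)) ≤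
        ∏ j : Fin N, M ^ (I.1 (Fin.castSucc j) : ℕ) := by
          refine Finset.prod_le_prod (fun j _ => by positivity) (fun j _ => ?_)
          exact pow_le_pow_left₀ (v.nonneg _) (hx j) _
      _ = M ^ (∑ j : Fin N, (I.1 (Fin.castSucc j) : ℕ)) := by
          rw [Finset.prod_pow_eq_pow_sum]
      _ = M ^ (d - (I.1 (Fin.last N) : ℕ)) := by
          congr 1
          have := midx_split N d I
          omega
  calc v (a i I) * ((∏ j : Fin N, v (x (Fin.castSucc j)) ^ (I.1 (Fin.castSucc j) : ℕ)) *
        v (x (Fin.last N)) ^ (I.1 (Fin.last N) : ℕ)) ≤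
      Real.exp ((I.1 (Fin.last N) : ℕ) * Bnorm N d v a) *
        ((M ^ (d - (I.1 (Fin.last N) : ℕ))) * v (x (Fin.last N)) ^ (I.1 (Fin.last N) : ℕ)) := by
        refine mul_le_mul (coeff_le N d v a hN i I) ?_ (by positivity) (le_of_lt (Real.exp_pos _))
        exact mul_le_mul_of_nonneg_right hprod (by positivity)
    _ = _ := by ring

lemma le_lam {Z : Set (Projectivization K (Fin (N + 1) → K))}
    (β : Fin (N + 1) → K) (hβ : β ≠ 0)
    (h1 : ∀ j : Fin N, v (β (Fin.castSucc j)) = 1) (h2 : β (Fin.last N) ≠ 0)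
    (h3 : Projectivization.mk K β hβ ∈ Z) :
    ENNReal.ofReal (Real.log ((v (β (Fin.last N)))⁻¹)) ≤ lam N v Z :=
  le_iSup_of_le β <| le_iSup_of_le hβ <| le_iSup_of_le h1 <| le_iSup_of_le h2 <|
    le_iSup_of_le h3 le_rfl

lemma lam_le {Z : Set (Projectivization K (Fin (N + 1) → K))} {c : ℝ≥0∞}
    (h : ∀ (β : Fin (N + 1) → K) (hβ : β ≠ 0),
      (∀ j : Fin N, v (β (Fin.castSucc j)) = 1) → β (Fin.last N) ≠ 0 →
      Projectivization.mk K β hβ ∈ Z →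
      ENNReal.ofReal (Real.log ((v (β (Fin.last N)))⁻¹)) ≤ c) :
    lam N v Z ≤ c :=
  iSup_le fun β => iSup_le fun hβ => iSup_le fun h1 => iSup_le fun h2 => iSup_le fun h3 =>
    h β hβ h1 h2 h3

lemma escape_step (hN : 1 ≤ N) (hd : 2 ≤ d) (hna : IsNonarchimedean (v : K → ℝ))
    (y : Fin (N + 1) → K) (hq : ∀ j : Fin N, v (y (Fin.castSucc j)) = 1)
    (hlt : Real.exp (Bnorm N d v a) * v (y (Fin.last N)) < 1) (j : Fin N) :
    v (Fvec N d a y (Fin.castSucc j)) = 1 := by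
  set B := Bnorm N d v a with hB
  set r := v (y (Fin.last N)) with hr
  have hr0 : 0 ≤ r := v.nonneg _
  have hBr0 : 0 ≤ Real.exp B * r := by positivity
  have hmono : ∀ I : MIdx N d, v (a j I * ∏ t, y t ^ (I.1 t : ℕ)) ≤ Real.exp B * r := by
    intro I
    have := mono_bound N d v a hN (le_of_lt one_pos) y (fun j' => (hq j').le) j I
    rw [one_pow, mul_one] at this
    refine le_trans this ?_
    have h1 : Real.exp ((I.1 (Fin.last N) : ℕ) * B) * r ^ (I.1 (Fin.last N) : ℕ)
        = (Real.exp B * r) ^ (I.1 (Fin.last N) : ℕ) := by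
      rw [mul_pow, ← Real.exp_nat_mul]
    rw [h1]
    exact pow_le_of_le_one hBr0 hlt.le (I.2.2.1).ne'
  have hsum : v (∑ I : MIdx N d, a j I * ∏ t, y t ^ (I.1 t : ℕ)) ≤ Real.exp B * r :=
    na_sum v hna _ _ hBr0 (fun I _ => hmono I)
  rw [Fvec_castSucc]
  rw [na_add_eq v hna (x := y (Fin.castSucc j) ^ d)
    (lt_of_le_of_lt hsum (by rw [map_pow, hq j, one_pow]; exact hlt))]
  rw [map_pow, hq j, one_pow]

end Key
section UpLow

variable (N d : ℕ) {K : Type*} [Field K] [IsAlgClosed K]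
  (v : AbsoluteValue K ℝ) (a : Coeffs N d K)

lemma key_lower (hN : 1 ≤ N) (hd : 2 ≤ d) (hna : IsNonarchimedean (v : K → ℝ))
    (Z : Set (Projectivization K (Fin (N + 1) → K)))
    (h : ENNReal.ofReal (Bnorm N d v a) < lam N v Z) :
    (d : ℝ≥0∞) * lam N v Z ≤ lam N v (imSet N (Fvec N d a) Z) := by
  set B := Bnorm N d v a with hBdef
  have hd0 : (d : ℝ≥0∞) ≠ 0 := by exact_mod_cast (by omega : d ≠ 0)
  have hdt : (d : ℝ≥0∞) ≠ ⊤ := ENNReal.natCast_ne_top d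
  refine le_of_forall_lt fun c hc => ?_
  have hc' : max c ((d : ℝ≥0∞) * ENNReal.ofReal B) < (d : ℝ≥0∞) * lam N v Z :=
    max_lt hc ((ENNReal.mul_lt_mul_iff_right hd0 hdt).mpr h)
  rw [lam] at hc'
  simp only [ENNReal.mul_iSup, lt_iSup_iff] at hc'
  obtain ⟨β, hβ, h1, h2, h3, hval⟩ := hc'
  -- hval : max c (d * ofReal B) < d * ofReal (log (v β_N)⁻¹)
  set ℓ := Real.log ((v (β (Fin.last N)))⁻¹) with hldef
  have hBl : B < ℓ := by
    have h4 : (d : ℝ≥0∞) * ENNReal.ofReal B < (d : ℝ≥0∞) * ENNReal.ofReal ℓ :=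
      lt_of_le_of_lt (le_max_right _ _) hval
    have h5 : ENNReal.ofReal B < ENNReal.ofReal ℓ := (ENNReal.mul_lt_mul_iff_right hd0 hdt).mp h4
    exact (ENNReal.ofReal_lt_ofReal_iff_of_nonneg (Bnorm_nonneg N d v a)).mp h5
  set r := v (β (Fin.last N)) with hrdef
  have hr0 : 0 < r := v.pos h2
  have hlt : Real.exp B * r < 1 := by
    have : Real.exp B < r⁻¹ := by
      rw [← Real.exp_log (inv_pos.mpr hr0)]
      exact Real.exp_lt_exp.mpr hBl
    calc Real.exp B * r < r⁻¹ * r := by exact mul_lt_mul_of_pos_right this hr0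
      _ = 1 := inv_mul_cancel₀ (ne_of_gt hr0)
  -- the image point qualifies
  set γ := Fvec N d a β with hγdef
  have hγlast : γ (Fin.last N) = β (Fin.last N) ^ d := Fvec_last N d a β
  have hγN : γ (Fin.last N) ≠ 0 := by rw [hγlast]; exact pow_ne_zero _ h2
  have hγ0 : γ ≠ 0 := fun hz => hγN (by rw [hz]; rfl)
  have hγq : ∀ j : Fin N, v (γ (Fin.castSucc j)) = 1 :=
    escape_step N d v a hN hd hna β h1 hlt
  have hmem : Projectivization.mk K γ hγ0 ∈ imSet N (Fvec N d a) Z :=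
    ⟨β, hβ, hγ0, h3, rfl⟩
  have hcontrib := le_lam N v γ hγ0 hγq hγN hmem
  have hcv : ENNReal.ofReal (Real.log ((v (γ (Fin.last N)))⁻¹)) =
      (d : ℝ≥0∞) * ENNReal.ofReal ℓ := by
    rw [hγlast, map_pow, ← inv_pow, Real.log_pow, ENNReal.ofReal_mul (by positivity),
      ENNReal.ofReal_natCast]
  rw [hcv] at hcontrib
  exact lt_of_lt_of_le (lt_of_le_of_lt (le_max_left _ _) hval) hcontrib

lemma key_upper (hN : 1 ≤ N) (hd : 2 ≤ d) (hna : IsNonarchimedean (v : K → ℝ))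
    (Z : Set (Projectivization K (Fin (N + 1) → K))) :
    lam N v (imSet N (Fvec N d a) Z) ≤
      max ((d : ℝ≥0∞) * lam N v Z) ((d : ℝ≥0∞) * ENNReal.ofReal (Bnorm N d v a)) := by
  set B := Bnorm N d v a with hBdef
  have hB0 : 0 ≤ B := Bnorm_nonneg N d v a
  refine lam_le N v fun γ hγ h1 h2 h3 => ?_
  obtain ⟨x, hx, hFx, hxZ, heq⟩ := h3
  rw [Projectivization.mk_eq_mk_iff] at heq
  obtain ⟨cu, hcu⟩ := heq
  obtain ⟨u, hu⟩ := IsAlgClosed.exists_pow_nat_eq (cu : K) (n := d) (by omega)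
  have hu0 : u ≠ 0 := by
    intro h0
    exact cu.ne_zero (by rw [← hu, h0, zero_pow (by omega : d ≠ 0)])
  set y := u • x with hydef
  have hyne : y ≠ 0 := smul_ne_zero hu0 hx
  have hFy : Fvec N d a y = γ := by
    rw [hydef, Fvec_smul, hu, ← hcu, Units.smul_def]
  have hyZ : Projectivization.mk K y hyne ∈ Z := by
    have : Projectivization.mk K y hyne = Projectivization.mk K x hx := by
      rw [Projectivization.mk_eq_mk_iff]
      exact ⟨Units.mk0 u hu0, rfl⟩
    rw [this]; exact hxZ
  have hglast : γ (Fin.last N) = y (Fin.last N) ^ d := by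
    rw [← hFy]; exact Fvec_last N d a y
  have hyN : y (Fin.last N) ≠ 0 := by
    intro h0
    exact h2 (by rw [hglast, h0, zero_pow (by omega : d ≠ 0)])
  set r := v (y (Fin.last N)) with hrdef
  have hr : 0 < r := v.pos hyN
  haveI : Nonempty (Fin N) := ⟨⟨0, hN⟩⟩
  have hNE : (Finset.univ : Finset (Fin N)).Nonempty := Finset.univ_nonempty
  set M := Finset.univ.sup' hNE (fun j => v (y (Fin.castSucc j))) with hMdef
  obtain ⟨j0, -, hj0⟩ := Finset.exists_mem_eq_sup' hNE (fun j => v (y (Fin.castSucc j)))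
  have hMle : ∀ j, v (y (Fin.castSucc j)) ≤ M := fun j => hMdef ▸ Finset.le_sup' (f := fun j => v (y (Fin.castSucc j))) (Finset.mem_univ j)
  have hM0 : 0 < M := by
    rcases lt_or_ge 0 M with h | h
    · exact h
    · exfalso
      have hall : ∀ j : Fin N, y (Fin.castSucc j) = 0 := fun j =>
        v.eq_zero.mp (le_antisymm (le_trans (hMle j) h) (v.nonneg _))
      have hγ0' : γ (Fin.castSucc ⟨0, hN⟩) = 0 := by
        rw [← hFy, Fvec_castSucc]
        have hz : ∀ I : MIdx N d, (∏ t, y t ^ (I.1 t : ℕ)) = 0 := fun I => by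
          obtain ⟨j, hj⟩ := midx_exists_pos N d I
          exact Finset.prod_eq_zero (Finset.mem_univ (Fin.castSucc j))
            (by rw [hall j, zero_pow (by omega : (I.1 (Fin.castSucc j) : ℕ) ≠ 0)])
        rw [hall ⟨0, hN⟩, zero_pow (by omega : d ≠ 0), zero_add]
        exact Finset.sum_eq_zero fun I _ => by rw [hz I, mul_zero]
      have := h1 ⟨0, hN⟩
      rw [hγ0', map_zero] at this
      exact zero_ne_one this
  have hmonoI : ∀ I : MIdx N d,
      v (a j0 I * ∏ t, y t ^ (I.1 t : ℕ)) ≤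
        Real.exp ((I.1 (Fin.last N) : ℕ) * B) * M ^ (d - (I.1 (Fin.last N) : ℕ)) *
          r ^ (I.1 (Fin.last N) : ℕ) :=
    fun I => mono_bound N d v a hN hM0.le y hMle j0 I
  by_cases hcase : Real.exp B * r < M
  · -- escape case
    have hBr0 : 0 ≤ Real.exp B * r := by positivity
    have hbnd : ∀ (j : Fin N) (I : MIdx N d),
        v (a j I * ∏ t, y t ^ (I.1 t : ℕ)) ≤ Real.exp B * r * M ^ (d - 1) := by
      intro j I
      refine le_trans (mono_bound N d v a hN hM0.le y hMle j I) ?_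
      set k : ℕ := (I.1 (Fin.last N) : ℕ) with hk
      have hk1 : 1 ≤ k := I.2.2.1
      have hkd : k < d := I.2.2.2
      have e1 : Real.exp ((k : ℕ) * B) * M ^ (d - k) * r ^ k
          = (Real.exp B * r) ^ k * M ^ (d - k) := by
        rw [mul_pow, ← Real.exp_nat_mul]; ring
      rw [e1]
      have e2 : (Real.exp B * r) ^ k ≤ (Real.exp B * r) * M ^ (k - 1) := by
        calc (Real.exp B * r) ^ k = (Real.exp B * r) * (Real.exp B * r) ^ (k - 1) := by
              rw [← pow_succ']; congr 1; omega
          _ ≤ (Real.exp B * r) * M ^ (k - 1) :=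
              mul_le_mul_of_nonneg_left (pow_le_pow_left₀ hBr0 hcase.le _) hBr0
      calc (Real.exp B * r) ^ k * M ^ (d - k) ≤
          (Real.exp B * r) * M ^ (k - 1) * M ^ (d - k) :=
            mul_le_mul_of_nonneg_right e2 (by positivity)
        _ = Real.exp B * r * M ^ (d - 1) := by
            rw [mul_assoc, ← pow_add]
            congr 2
            omega
    have hqlt : Real.exp B * r * M ^ (d - 1) < M ^ d := by
      have hmd : M ^ d = M * M ^ (d - 1) := by
        rw [← pow_succ']; congr 1; omega
      rw [hmd]
      exact mul_lt_mul_of_pos_right hcase (pow_pos hM0 _)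
    have hvsum : ∀ j : Fin N,
        v (∑ I : MIdx N d, a j I * ∏ t, y t ^ (I.1 t : ℕ)) ≤ Real.exp B * r * M ^ (d - 1) :=
      fun j => na_sum v hna _ _ (by positivity) (fun I _ => hbnd j I)
    have hMd : M ^ d = 1 := by
      have hvy : v (y (Fin.castSucc j0) ^ d) = M ^ d := by rw [map_pow, ← hj0]
      have : v (γ (Fin.castSucc j0)) = M ^ d := by
        rw [← hFy, Fvec_castSucc, na_add_eq v hna (by rw [hvy]; exact lt_of_le_of_lt (hvsum j0) hqlt), hvy]
      rw [h1 j0] at this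
      exact this.symm
    have hM1 : M = 1 := by
      rcases lt_trichotomy M 1 with h | h | h
      · exact absurd hMd (ne_of_lt (pow_lt_one₀ hM0.le h (by omega)))
      · exact h
      · exact absurd hMd (ne_of_gt (one_lt_pow₀ h (by omega)))
    have hyq : ∀ j : Fin N, v (y (Fin.castSucc j)) = 1 := by
      intro j
      by_contra hne
      have hlt1 : v (y (Fin.castSucc j)) < 1 := lt_of_le_of_ne (hM1 ▸ hMle j) hne
      have hlt2 : v (γ (Fin.castSucc j)) < 1 := by
        rw [← hFy, Fvec_castSucc]
        refine lt_of_le_of_lt (hna _ _) (max_lt ?_ ?_)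
        · rw [map_pow]
          exact pow_lt_one₀ (v.nonneg _) hlt1 (by omega)
        · exact lt_of_le_of_lt (hvsum j) (by rw [← hMd]; exact hqlt)
      rw [h1 j] at hlt2
      exact absurd hlt2 (lt_irrefl _)
    refine le_max_of_le_left ?_
    have hcv : ENNReal.ofReal (Real.log ((v (γ (Fin.last N)))⁻¹)) =
        (d : ℝ≥0∞) * ENNReal.ofReal (Real.log (r⁻¹)) := by
      rw [hglast, map_pow, ← inv_pow, Real.log_pow, ENNReal.ofReal_mul (by positivity),
        ENNReal.ofReal_natCast]
    rw [hcv]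
    exact mul_le_mul_right (le_lam N v y hyne hyq hyN hyZ) _
  · -- bounded case
    push_neg at hcase
    have hb : (1 : ℝ) ≤ Real.exp (d * B) * r ^ d := by
      have hsumb : v (∑ I : MIdx N d, a j0 I * ∏ t, y t ^ (I.1 t : ℕ)) ≤
          Real.exp (d * B) * r ^ d := by
        refine na_sum v hna _ _ (by positivity) (fun I _ => ?_)
        refine le_trans (hmonoI I) ?_
        set k : ℕ := (I.1 (Fin.last N) : ℕ) with hk
        have hkd : k < d := I.2.2.2
        have e2 : M ^ (d - k) ≤ (Real.exp B * r) ^ (d - k) :=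
          pow_le_pow_left₀ hM0.le hcase _
        calc Real.exp ((k : ℕ) * B) * M ^ (d - k) * r ^ k ≤
            Real.exp ((k : ℕ) * B) * (Real.exp B * r) ^ (d - k) * r ^ k := by
              refine mul_le_mul_of_nonneg_right (mul_le_mul_of_nonneg_left e2 (by positivity)) (by positivity)
          _ = Real.exp (d * B) * r ^ d := by
              have hc1 : Real.exp ((k : ℝ) * B) * Real.exp (((d - k : ℕ) : ℝ) * B)
                  = Real.exp ((d : ℝ) * B) := by
                rw [← Real.exp_add, ← add_mul, ← Nat.cast_add,
                  (by omega : k + (d - k) = d)]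
              have hc2 : r ^ (d - k) * r ^ k = r ^ d := by
                rw [← pow_add]; congr 1; omega
              calc Real.exp ((k : ℕ) * B) * (Real.exp B * r) ^ (d - k) * r ^ k
                  = (Real.exp ((k : ℝ) * B) * Real.exp (((d - k : ℕ) : ℝ) * B)) *
                      (r ^ (d - k) * r ^ k) := by
                    rw [mul_pow, ← Real.exp_nat_mul]; ring
                _ = Real.exp (d * B) * r ^ d := by rw [hc1, hc2]
      have hy1 : v (γ (Fin.castSucc j0)) ≤ Real.exp (d * B) * r ^ d := by
        rw [← hFy, Fvec_castSucc]
        refine le_trans (hna _ _) (max_le ?_ hsumb)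
        rw [map_pow, ← hj0]
        calc M ^ d ≤ (Real.exp B * r) ^ d := pow_le_pow_left₀ hM0.le hcase _
          _ = Real.exp (d * B) * r ^ d := by rw [mul_pow, ← Real.exp_nat_mul]
      rw [h1 j0] at hy1
      exact hy1
    have hinv : (v (γ (Fin.last N)))⁻¹ ≤ Real.exp (d * B) := by
      rw [hglast, map_pow]
      rw [inv_eq_one_div, div_le_iff₀ (pow_pos hr d)]
      linarith [hb]
    have hlog : Real.log ((v (γ (Fin.last N)))⁻¹) ≤ (d : ℝ) * B := by
      have hpos : (0 : ℝ) < (v (γ (Fin.last N)))⁻¹ := inv_pos.mpr (v.pos h2)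
      calc Real.log ((v (γ (Fin.last N)))⁻¹) ≤ Real.log (Real.exp (d * B)) :=
            Real.log_le_log hpos hinv
        _ = (d : ℝ) * B := Real.log_exp _
    refine le_max_of_le_right ?_
    calc ENNReal.ofReal (Real.log ((v (γ (Fin.last N)))⁻¹)) ≤ ENNReal.ofReal ((d : ℝ) * B) :=
          ENNReal.ofReal_le_ofReal hlog
      _ = (d : ℝ≥0∞) * ENNReal.ofReal B := by
          rw [ENNReal.ofReal_mul (by positivity), ENNReal.ofReal_natCast]

lemma step_gt (hN : 1 ≤ N) (hd : 2 ≤ d) (hna : IsNonarchimedean (v : K → ℝ))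
    (Z : Set (Projectivization K (Fin (N + 1) → K)))
    (h : ENNReal.ofReal (Bnorm N d v a) < lam N v Z) :
    lam N v (imSet N (Fvec N d a) Z) = (d : ℝ≥0∞) * lam N v Z := by
  refine le_antisymm ?_ (key_lower N d v a hN hd hna Z h)
  refine le_trans (key_upper N d v a hN hd hna Z) ?_
  rw [max_eq_left]
  exact mul_le_mul_right h.le _

lemma step_le (hN : 1 ≤ N) (hd : 2 ≤ d) (hna : IsNonarchimedean (v : K → ℝ))
    (Z : Set (Projectivization K (Fin (N + 1) → K)))
    (h : lam N v Z ≤ ENNReal.ofReal (Bnorm N d v a)) :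
    lam N v (imSet N (Fvec N d a) Z) ≤ (d : ℝ≥0∞) * ENNReal.ofReal (Bnorm N d v a) :=
  le_trans (key_upper N d v a hN hd hna Z) (max_le (mul_le_mul_right h _) le_rfl)

end UpLow
end Stmt10Aux

/-- Over an algebraically closed field with a nontrivial non-archimedean
absolute value, there is a Green's function `G` on subsets of `ℙ^N(K)` such that for
every `Z`: (1) `d^{-n} λ(f_a^n(Z)) → G(Z)` in `[0,∞]`; (2) `G(f_a(Z)) = d·G(Z)`;
(3) `λ(Z) > B(f_a) → G(Z) = λ(Z)`; (4) if `λ(Z) < ∞` then `G(Z)` is finite and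
`|G(Z) − λ(Z)| ≤ 2·B(f_a)`; (5) if the iterated images of `Z` take finitely many values,
all with finite `λ`, then `G(Z) = 0`. -/
theorem stmt10 (N d : ℕ) (hN : 1 ≤ N) (hd : 2 ≤ d) (K : Type*) [Field K] [IsAlgClosed K]
    (v : AbsoluteValue K ℝ) (hna : IsNonarchimedean (v : K → ℝ))
    (hnt : ∃ x : K, x ≠ 0 ∧ v x ≠ 1)
    (a : Coeffs N d K) :
    ∃ G : Set (Projectivization K (Fin (N + 1) → K)) → ℝ≥0∞,
      ∀ Z : Set (Projectivization K (Fin (N + 1) → K)),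
        Tendsto (fun n : ℕ =>
            lam N v ((imSet N (Fvec N d a))^[n] Z) / (d : ℝ≥0∞) ^ n)
          atTop (𝓝 (G Z)) ∧
        G (imSet N (Fvec N d a) Z) = (d : ℝ≥0∞) * G Z ∧
        (ENNReal.ofReal (Bnorm N d v a) < lam N v Z → G Z = lam N v Z) ∧
        (lam N v Z ≠ ⊤ → G Z ≠ ⊤ ∧
          |(G Z).toReal - (lam N v Z).toReal| ≤ 2 * Bnorm N d v a) ∧
        (((Set.range fun n : ℕ => (imSet N (Fvec N d a))^[n] Z).Finite ∧
            ∀ n : ℕ, lam N v ((imSet N (Fvec N d a))^[n] Z) ≠ ⊤) → G Z = 0) := by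
  classical
  have hB0 : 0 ≤ Bnorm N d v a := Stmt10Aux.Bnorm_nonneg N d v a
  have hd0 : (d : ℝ≥0∞) ≠ 0 := by exact_mod_cast (by omega : d ≠ 0)
  have hdt : (d : ℝ≥0∞) ≠ ⊤ := ENNReal.natCast_ne_top d
  have hd1 : (1 : ℝ≥0∞) < (d : ℝ≥0∞) := by exact_mod_cast (by omega : 1 < d)
  -- iteration lemma
  have hiter : ∀ (Z : Set (Projectivization K (Fin (N + 1) → K))) (n k : ℕ),
      ENNReal.ofReal (Bnorm N d v a) < lam N v ((imSet N (Fvec N d a))^[n] Z) →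
      lam N v ((imSet N (Fvec N d a))^[n + k] Z)
          = (d : ℝ≥0∞) ^ k * lam N v ((imSet N (Fvec N d a))^[n] Z) ∧
        ENNReal.ofReal (Bnorm N d v a) < lam N v ((imSet N (Fvec N d a))^[n + k] Z) := by
    intro Z n k h
    induction k with
    | zero => exact ⟨by simp, by simpa using h⟩
    | succ k ih =>
      have h1 : (imSet N (Fvec N d a))^[n + (k + 1)] Z
          = imSet N (Fvec N d a) ((imSet N (Fvec N d a))^[n + k] Z) := by
        rw [show n + (k + 1) = (n + k) + 1 by ring, Function.iterate_succ_apply']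
      have hstep := Stmt10Aux.step_gt N d v a hN hd hna _ ih.2
      constructor
      · rw [h1, hstep, ih.1, pow_succ]; ring
      · rw [h1, hstep]
        exact lt_of_lt_of_le ih.2 (le_mul_of_one_le_left' hd1.le)
  set G : Set (Projectivization K (Fin (N + 1) → K)) → ℝ≥0∞ := fun Z =>
    if h : ∃ n, ENNReal.ofReal (Bnorm N d v a) <
        lam N v ((imSet N (Fvec N d a))^[n] Z) then
      lam N v ((imSet N (Fvec N d a))^[Nat.find h] Z) / (d : ℝ≥0∞) ^ (Nat.find h)
    else 0 with hGdef
  have hTend : ∀ Z, Tendsto (fun n : ℕ =>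
      lam N v ((imSet N (Fvec N d a))^[n] Z) / (d : ℝ≥0∞) ^ n) atTop (𝓝 (G Z)) := by
    intro Z
    by_cases hP : ∃ n, ENNReal.ofReal (Bnorm N d v a) <
        lam N v ((imSet N (Fvec N d a))^[n] Z)
    · have hGv : G Z = lam N v ((imSet N (Fvec N d a))^[Nat.find hP] Z) /
          (d : ℝ≥0∞) ^ (Nat.find hP) := by
        simp only [hGdef]; rw [dif_pos hP]
      rw [hGv]
      refine Tendsto.congr' ?_ tendsto_const_nhds
      filter_upwards [eventually_ge_atTop (Nat.find hP)] with n hn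
      obtain ⟨k, rfl⟩ := Nat.exists_eq_add_of_le hn
      rw [(hiter Z _ k (Nat.find_spec hP)).1, pow_add,
        mul_comm ((d : ℝ≥0∞) ^ k) (lam N v ((imSet N (Fvec N d a))^[Nat.find hP] Z)),
        ENNReal.mul_div_mul_right _ _ (pow_ne_zero _ hd0) (ENNReal.pow_ne_top hdt)]
    · have hGv : G Z = 0 := by simp only [hGdef]; rw [dif_neg hP]
      rw [hGv]
      push_neg at hP
      have hle : ∀ n : ℕ, lam N v ((imSet N (Fvec N d a))^[n] Z) / (d : ℝ≥0∞) ^ n ≤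
          ENNReal.ofReal (Bnorm N d v a) * ((d : ℝ≥0∞)⁻¹) ^ n := by
        intro n
        rw [div_eq_mul_inv, ← ENNReal.inv_pow]
        exact mul_le_mul_left (hP n) _
      have h0 : Tendsto (fun n : ℕ =>
          ENNReal.ofReal (Bnorm N d v a) * ((d : ℝ≥0∞)⁻¹) ^ n) atTop (𝓝 0) := by
        have := ENNReal.Tendsto.const_mul (a := ENNReal.ofReal (Bnorm N d v a))
          (ENNReal.tendsto_pow_atTop_nhds_zero_of_lt_one (ENNReal.inv_lt_one.mpr hd1))
          (Or.inr ENNReal.ofReal_ne_top)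
        simpa using this
      exact tendsto_of_tendsto_of_tendsto_of_le_of_le tendsto_const_nhds h0
        (fun n => zero_le') hle
  refine ⟨G, fun Z => ⟨hTend Z, ?_, ?_, ?_, ?_⟩⟩
  · -- G (f Z) = d * G Z
    have h1 := hTend (imSet N (Fvec N d a) Z)
    have h3 : Tendsto (fun n : ℕ =>
        lam N v ((imSet N (Fvec N d a))^[n + 1] Z) / (d : ℝ≥0∞) ^ (n + 1)) atTop
        (𝓝 (G Z)) := (hTend Z).comp (tendsto_add_atTop_nat 1)
    have h4 := ENNReal.Tendsto.const_mul (a := (d : ℝ≥0∞)) h3 (Or.inr hdt)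
    have h2 : Tendsto (fun n : ℕ =>
        lam N v ((imSet N (Fvec N d a))^[n] (imSet N (Fvec N d a) Z)) / (d : ℝ≥0∞) ^ n)
        atTop (𝓝 ((d : ℝ≥0∞) * G Z)) := by
      refine h4.congr fun n => ?_
      rw [← Function.iterate_succ_apply]
      rw [pow_succ']
      rw [← mul_div_assoc, ENNReal.mul_div_mul_left _ _ hd0 hdt]
    exact tendsto_nhds_unique h1 h2
  · -- escape identity
    intro h
    have hP : ∃ n, ENNReal.ofReal (Bnorm N d v a) <
        lam N v ((imSet N (Fvec N d a))^[n] Z) := ⟨0, by simpa using h⟩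
    have h0 : Nat.find hP = 0 := (Nat.find_eq_zero hP).mpr (by simpa using h)
    simp only [hGdef]
    rw [dif_pos hP, h0]
    simp
  · -- finite bound
    intro hfin
    by_cases hP : ∃ n, ENNReal.ofReal (Bnorm N d v a) <
        lam N v ((imSet N (Fvec N d a))^[n] Z)
    · rcases Nat.eq_zero_or_pos (Nat.find hP) with h0 | h0
      · have hGv : G Z = lam N v Z := by
          simp only [hGdef]; rw [dif_pos hP, h0]; simp
        rw [hGv]
        refine ⟨hfin, ?_⟩
        rw [sub_self, abs_zero]
        linarith
      · have hlt0 : lam N v Z ≤ ENNReal.ofReal (Bnorm N d v a) := by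
          have := Nat.find_min hP h0
          simpa using not_lt.mp this
        have hprev : lam N v ((imSet N (Fvec N d a))^[Nat.find hP - 1] Z) ≤
            ENNReal.ofReal (Bnorm N d v a) :=
          not_lt.mp (Nat.find_min hP (by omega))
        have hn0 : lam N v ((imSet N (Fvec N d a))^[Nat.find hP] Z) ≤
            (d : ℝ≥0∞) * ENNReal.ofReal (Bnorm N d v a) := by
          rw [show Nat.find hP = (Nat.find hP - 1) + 1 by omega,
            Function.iterate_succ_apply']
          exact Stmt10Aux.step_le N d v a hN hd hna _ hprev
        have hGle : G Z ≤ ENNReal.ofReal (Bnorm N d v a) := by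
          simp only [hGdef]; rw [dif_pos hP]
          calc lam N v ((imSet N (Fvec N d a))^[Nat.find hP] Z) / (d : ℝ≥0∞) ^ (Nat.find hP)
              ≤ ((d : ℝ≥0∞) * ENNReal.ofReal (Bnorm N d v a)) / (d : ℝ≥0∞) ^ (Nat.find hP) :=
                ENNReal.div_le_div_right hn0 _
            _ = ENNReal.ofReal (Bnorm N d v a) / (d : ℝ≥0∞) ^ (Nat.find hP - 1) := by
                rw [show Nat.find hP = (Nat.find hP - 1) + 1 by omega, pow_succ',
                  ENNReal.mul_div_mul_left _ _ hd0 hdt]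
                congr 2
            _ ≤ ENNReal.ofReal (Bnorm N d v a) := by
                rw [div_eq_mul_inv]
                calc ENNReal.ofReal (Bnorm N d v a) * ((d : ℝ≥0∞) ^ (Nat.find hP - 1))⁻¹ ≤
                    ENNReal.ofReal (Bnorm N d v a) * 1 :=
                      mul_le_mul_right (ENNReal.inv_le_one.mpr (one_le_pow₀ hd1.le)) _
                  _ = _ := mul_one _
        refine ⟨ne_top_of_le_ne_top ENNReal.ofReal_ne_top hGle, ?_⟩
        have hg : (G Z).toReal ≤ Bnorm N d v a := ENNReal.toReal_le_of_le_ofReal hB0 hGle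
        have hl : (lam N v Z).toReal ≤ Bnorm N d v a :=
          ENNReal.toReal_le_of_le_ofReal hB0 hlt0
        have hg0 : 0 ≤ (G Z).toReal := ENNReal.toReal_nonneg
        have hl0 : 0 ≤ (lam N v Z).toReal := ENNReal.toReal_nonneg
        rw [abs_le]
        constructor <;> linarith
    · have hGv : G Z = 0 := by simp only [hGdef]; rw [dif_neg hP]
      push_neg at hP
      have hlt0 : lam N v Z ≤ ENNReal.ofReal (Bnorm N d v a) := by simpa using hP 0
      rw [hGv]
      refine ⟨ENNReal.zero_ne_top, ?_⟩
      have hl : (lam N v Z).toReal ≤ Bnorm N d v a :=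
        ENNReal.toReal_le_of_le_ofReal hB0 hlt0
      have hl0 : 0 ≤ (lam N v Z).toReal := ENNReal.toReal_nonneg
      rw [ENNReal.toReal_zero, zero_sub, abs_neg, abs_of_nonneg hl0]
      linarith
  · -- PCF vanishing
    rintro ⟨hfin, hne⟩
    by_cases hP : ∃ n, ENNReal.ofReal (Bnorm N d v a) <
        lam N v ((imSet N (Fvec N d a))^[n] Z)
    · exfalso
      have hc0 : lam N v ((imSet N (Fvec N d a))^[Nat.find hP] Z) ≠ 0 :=
        (lt_of_le_of_lt zero_le' (Nat.find_spec hP)).ne'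
      have hct : lam N v ((imSet N (Fvec N d a))^[Nat.find hP] Z) ≠ ⊤ := hne _
      have hg : ∀ k : ℕ, lam N v ((imSet N (Fvec N d a))^[Nat.find hP + k] Z) =
          (d : ℝ≥0∞) ^ k * lam N v ((imSet N (Fvec N d a))^[Nat.find hP] Z) :=
        fun k => (hiter Z (Nat.find hP) k (Nat.find_spec hP)).1
      have hsm : StrictMono (fun k : ℕ =>
          (d : ℝ≥0∞) ^ k * lam N v ((imSet N (Fvec N d a))^[Nat.find hP] Z)) := by
        refine strictMono_nat_of_lt_succ fun k => ?_
        refine (ENNReal.mul_lt_mul_iff_left hc0 hct).mpr ?_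
        calc (d : ℝ≥0∞) ^ k = (d : ℝ≥0∞) ^ k * 1 := (mul_one _).symm
          _ < (d : ℝ≥0∞) ^ k * (d : ℝ≥0∞) :=
              (ENNReal.mul_lt_mul_iff_right (pow_ne_zero _ hd0) (ENNReal.pow_ne_top hdt)).mpr hd1
          _ = (d : ℝ≥0∞) ^ (k + 1) := (pow_succ _ _).symm
      have hsub : Set.range (fun k : ℕ =>
          (d : ℝ≥0∞) ^ k * lam N v ((imSet N (Fvec N d a))^[Nat.find hP] Z)) ⊆
          (lam N v) '' (Set.range fun n : ℕ => (imSet N (Fvec N d a))^[n] Z) := by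
        rintro x ⟨k, rfl⟩
        exact ⟨(imSet N (Fvec N d a))^[Nat.find hP + k] Z, ⟨Nat.find hP + k, rfl⟩, hg k⟩
      exact (Set.infinite_range_of_injective hsm.injective)
        ((hfin.image (lam N v)).subset hsub)
    · simp only [hGdef]; rw [dif_neg hP]
end

section
/- Let K be an algebraically closed field equipped with a nontrivial non-archimedean absolute value |·|. Let F ∈ K[x_0,…,x_N] be homogeneous of degree t ≥ 1 satisfying F(x_0,…,x_{N−1},0) = ∏_{i=0}^{N−1} x_i^{e_i} for some nonnegative integers e_i, and write F = ∑_{j=0}^{t} c_j(x_0,…,x_{N−1})·x_N^j, where each c_j is homogeneous of degree t−j. Let ‖c_j‖ denote the maximum of the absolute values of the coefficients of c_j (the Gauss norm). Then, for Z the zero locus of F in ℙ^N(K), one has λ(Z) = max_{1 ≤ j ≤ t} (1/j)·log⁺‖c_j‖. -/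
open MvPolynomial Filter Topology
open scoped ENNReal

namespace Stmt13Aux

open MvPolynomial

variable {K : Type*} [Field K] (v : AbsoluteValue K ℝ)

theorem na_sum (hna : IsNonarchimedean (v : K → ℝ)) {ι : Type*} (s : Finset ι) (f : ι → K)
    {M : ℝ} (hM : 0 ≤ M) (h : ∀ i ∈ s, v (f i) ≤ M) : v (∑ i ∈ s, f i) ≤ M := by
  classical
  induction s using Finset.cons_induction with
  | empty => simpa using hM
  | cons a s ha ih =>
      rw [Finset.sum_cons]
      refine le_trans (hna _ _) (max_le (h a (Finset.mem_cons_self a s)) ?_)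
      exact ih fun i hi => h i (Finset.mem_cons_of_mem hi)

theorem na_nat (hna : IsNonarchimedean (v : K → ℝ)) (n : ℕ) : v (n : K) ≤ 1 := by
  induction n with
  | zero => simp
  | succ n ih =>
      push_cast
      refine le_trans (hna _ _) (max_le ih (by simp))

theorem na_int (hna : IsNonarchimedean (v : K → ℝ)) (n : ℤ) : v (n : K) ≤ 1 := by
  rcases Int.natAbs_eq n with h | h <;> rw [h]
  · rw [Int.cast_natCast]
    exact na_nat v hna n.natAbs
  · rw [Int.cast_neg, map_neg_eq_map, Int.cast_natCast]
    exact na_nat v hna n.natAbs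

/-- Gauss norm of a multivariate polynomial, as a nonnegative real. -/
def GvN {n : ℕ} (p : MvPolynomial (Fin n) K) : NNReal :=
  p.support.sup fun m => ⟨v (coeff m p), v.nonneg _⟩

def Gv {n : ℕ} (p : MvPolynomial (Fin n) K) : ℝ := GvN v p

theorem Gv_nonneg {n : ℕ} (p : MvPolynomial (Fin n) K) : 0 ≤ Gv v p := (GvN v p).2

theorem Gv_zero {n : ℕ} : Gv (n := n) v 0 = 0 := by simp [Gv, GvN]; rfl

theorem coeff_le_Gv {n : ℕ} (p : MvPolynomial (Fin n) K) (m : Fin n →₀ ℕ) :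
    v (coeff m p) ≤ Gv v p := by
  by_cases h : coeff m p = 0
  · simp [h, Gv_nonneg]
  · exact_mod_cast (Finset.le_sup (f := fun m => (⟨v (coeff m p), v.nonneg _⟩ : NNReal))
      (mem_support_iff.2 h) : (⟨v (coeff m p), v.nonneg _⟩ : NNReal) ≤ GvN v p)

theorem Gv_le {n : ℕ} {p : MvPolynomial (Fin n) K} {M : ℝ} (hM : 0 ≤ M)
    (h : ∀ m ∈ p.support, v (coeff m p) ≤ M) : Gv v p ≤ M := by
  have : GvN v p ≤ ⟨M, hM⟩ := Finset.sup_le fun m hm => h m hm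
  exact_mod_cast this

theorem exists_Gv {n : ℕ} {p : MvPolynomial (Fin n) K} (hp : p ≠ 0) :
    ∃ m ∈ p.support, Gv v p = v (coeff m p) := by
  obtain ⟨m, hm, hm'⟩ := Finset.exists_mem_eq_sup p.support (support_nonempty.2 hp)
    (fun m => (⟨v (coeff m p), v.nonneg _⟩ : NNReal))
  exact ⟨m, hm, congrArg (fun x : NNReal => (x : ℝ)) hm'⟩

theorem eval_le_Gv (hna : IsNonarchimedean (v : K → ℝ)) {n : ℕ} (p : MvPolynomial (Fin n) K)
    (x : Fin n → K) (hx : ∀ i, v (x i) ≤ 1) : v (eval x p) ≤ Gv v p := by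
  rw [eval_eq']
  refine na_sum v hna _ _ (Gv_nonneg v p) fun m hm => ?_
  rw [v.map_mul]
  calc v (coeff m p) * v (∏ i, x i ^ m i) ≤ Gv v p * 1 := by
        refine mul_le_mul (coeff_le_Gv v p m) ?_ (v.nonneg _) (Gv_nonneg v p)
        rw [map_prod]
        refine Finset.prod_le_one (fun i _ => v.nonneg _) fun i _ => ?_
        rw [v.map_pow]
        exact pow_le_one₀ (v.nonneg _) (hx i)
    _ = Gv v p := mul_one _

/-- Gauss norm of a univariate polynomial. -/
def GPN (g : Polynomial K) : NNReal :=
  g.support.sup fun k => ⟨v (g.coeff k), v.nonneg _⟩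

def GP (g : Polynomial K) : ℝ := GPN v g

theorem GP_nonneg (g : Polynomial K) : 0 ≤ GP v g := (GPN v g).2

theorem GP_zero : GP v (0 : Polynomial K) = 0 := by simp [GP, GPN]; rfl

theorem coeff_le_GP (g : Polynomial K) (k : ℕ) : v (g.coeff k) ≤ GP v g := by
  by_cases h : g.coeff k = 0
  · simp [h, GP_nonneg]
  · exact_mod_cast (Finset.le_sup (f := fun k => (⟨v (g.coeff k), v.nonneg _⟩ : NNReal))
      (Polynomial.mem_support_iff.2 h) : (⟨v (g.coeff k), v.nonneg _⟩ : NNReal) ≤ GPN v g)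

theorem GP_le {g : Polynomial K} {M : ℝ} (hM : 0 ≤ M)
    (h : ∀ k ∈ g.support, v (g.coeff k) ≤ M) : GP v g ≤ M := by
  have : GPN v g ≤ ⟨M, hM⟩ := Finset.sup_le fun k hk => h k hk
  exact_mod_cast this

theorem exists_GP {g : Polynomial K} (hg : g ≠ 0) :
    ∃ k ∈ g.support, GP v g = v (g.coeff k) := by
  obtain ⟨k, hk, hk'⟩ := Finset.exists_mem_eq_sup g.support
    (Polynomial.support_nonempty.2 hg) (fun k => (⟨v (g.coeff k), v.nonneg _⟩ : NNReal))
  exact ⟨k, hk, congrArg (fun x : NNReal => (x : ℝ)) hk'⟩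

theorem eval_le_GP (hna : IsNonarchimedean (v : K → ℝ)) (g : Polynomial K)
    (u : K) (hu : v u ≤ 1) : v (g.eval u) ≤ GP v g := by
  rw [Polynomial.eval_eq_sum, Polynomial.sum_def]
  refine na_sum v hna _ _ (GP_nonneg v g) fun k hk => ?_
  rw [v.map_mul, v.map_pow]
  calc v (g.coeff k) * v u ^ k ≤ GP v g * 1 :=
        mul_le_mul (coeff_le_GP v g k) (pow_le_one₀ (v.nonneg _) hu) (by positivity)
          (GP_nonneg v g)
    _ = GP v g := mul_one _

theorem vpow_eq_one {a : ℝ} {m : ℕ} (hm : m ≠ 0) (ha : 0 ≤ a) (h : a ^ m = 1) : a = 1 := by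
  rcases lt_trichotomy a 1 with hlt | rfl | hgt
  · exfalso; have := pow_lt_one₀ ha hlt hm; rw [h] at this; exact lt_irrefl _ this
  · rfl
  · exfalso; have := one_lt_pow₀ hgt hm; rw [h] at this; exact lt_irrefl _ this

theorem v_root_of_unity {m : ℕ} (hm : m ≠ 0) {δ : K} (hδm : δ ^ m = 1) : v δ = 1 := by
  refine vpow_eq_one hm (v.nonneg _) ?_
  rw [← v.map_pow, hδm, v.map_one]

theorem na_unit_dist (hna : IsNonarchimedean (v : K → ℝ)) {m : ℕ} (hm : v ((m : ℕ) : K) = 1)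
    {δ : K} (hδm : δ ^ m = 1) (hδ : δ ≠ 1) : v (δ - 1) = 1 := by
  have hm0 : m ≠ 0 := by rintro rfl; simp at hm
  have hvδ : v δ = 1 := v_root_of_unity v hm0 hδm
  have hgeom : ∑ i ∈ Finset.range m, δ ^ i = 0 := by
    rw [geom_sum_eq hδ, hδm, sub_self, zero_div]
  have key : ((m : ℕ) : K) = (-∑ i ∈ Finset.range m, ∑ k ∈ Finset.range i, δ ^ k) * (δ - 1) := by
    have h1 : ∀ i : ℕ, (1 : K) - δ ^ i = (-∑ k ∈ Finset.range i, δ ^ k) * (δ - 1) := by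
      intro i
      have := geom_sum_mul δ i
      rw [neg_mul]
      linear_combination this
    calc ((m : ℕ) : K) = ∑ i ∈ Finset.range m, ((1 : K) - δ ^ i) := by
          rw [Finset.sum_sub_distrib, hgeom, sub_zero, Finset.sum_const, Finset.card_range,
            nsmul_eq_mul, mul_one]
      _ = ∑ i ∈ Finset.range m, (-∑ k ∈ Finset.range i, δ ^ k) * (δ - 1) :=
          Finset.sum_congr rfl fun i _ => h1 i
      _ = (-∑ i ∈ Finset.range m, ∑ k ∈ Finset.range i, δ ^ k) * (δ - 1) := by
          rw [← Finset.sum_mul, ← Finset.sum_neg_distrib]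
  have hT : v (-∑ i ∈ Finset.range m, ∑ k ∈ Finset.range i, δ ^ k) ≤ 1 := by
    rw [map_neg_eq_map]
    refine na_sum v hna _ _ zero_le_one fun i _ => ?_
    refine na_sum v hna _ _ zero_le_one fun k _ => ?_
    rw [v.map_pow, hvδ, one_pow]
  have hup : v (δ - 1) ≤ 1 := by
    rw [sub_eq_add_neg]
    refine le_trans (hna _ _) ?_
    rw [map_neg_eq_map, v.map_one, hvδ, max_self]
  have hdown : 1 ≤ v (δ - 1) := by
    have := congrArg v key
    rw [hm, v.map_mul] at this
    nlinarith [v.nonneg (δ - 1), v.nonneg (-∑ i ∈ Finset.range m, ∑ k ∈ Finset.range i, δ ^ k)]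
  linarith

theorem exists_units_finset [IsAlgClosed K] (hna : IsNonarchimedean (v : K → ℝ)) (n : ℕ) :
    ∃ S : Finset K, n ≤ S.card ∧ (∀ x ∈ S, v x = 1) ∧
      ∀ x ∈ S, ∀ y ∈ S, x ≠ y → v (x - y) = 1 := by
  classical
  obtain ⟨p, hpn, hp⟩ := Nat.exists_infinite_primes n
  obtain ⟨q, hqp, hq⟩ := Nat.exists_infinite_primes (max n (p + 1))
  have hpq : p ≠ q := by omega
  have hvm : v ((p : ℕ) : K) = 1 ∨ v ((q : ℕ) : K) = 1 := by
    by_contra hcon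
    push_neg at hcon
    have hvp : v ((p : ℕ) : K) < 1 := lt_of_le_of_ne (na_nat v hna p) hcon.1
    have hvq : v ((q : ℕ) : K) < 1 := lt_of_le_of_ne (na_nat v hna q) hcon.2
    have hco : IsCoprime (p : ℤ) (q : ℤ) :=
      Nat.isCoprime_iff_coprime.2 ((Nat.coprime_primes hp hq).2 hpq)
    obtain ⟨a, b, hab⟩ := hco
    have : (1 : K) = (a : K) * p + (b : K) * q := by
      have := congrArg (fun z : ℤ => (z : K)) hab
      push_cast at this
      simpa using this.symm
    have h1 : (1 : ℝ) = v ((a : K) * p + (b : K) * q) := by rw [← this, v.map_one]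
    have h2 : v ((a : K) * p + (b : K) * q) < 1 := by
      refine lt_of_le_of_lt (hna _ _) ?_
      rw [max_lt_iff, v.map_mul, v.map_mul]
      constructor
      · calc v ((a : K)) * v ((p : ℕ) : K) ≤ 1 * v ((p : ℕ) : K) := by
              have := na_int v hna a
              nlinarith [v.nonneg ((p : ℕ) : K)]
          _ < 1 := by rw [one_mul]; exact hvp
      · calc v ((b : K)) * v ((q : ℕ) : K) ≤ 1 * v ((q : ℕ) : K) := by
              have := na_int v hna b
              nlinarith [v.nonneg ((q : ℕ) : K)]
          _ < 1 := by rw [one_mul]; exact hvq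
    linarith
  obtain ⟨m, hm, hmn, hmprime⟩ : ∃ m : ℕ, v ((m : ℕ) : K) = 1 ∧ n ≤ m ∧ m.Prime := by
    rcases hvm with h | h
    · exact ⟨p, h, hpn, hp⟩
    · exact ⟨q, h, le_trans (le_max_left _ _) hqp, hq⟩
  have hm0 : m ≠ 0 := hmprime.ne_zero
  have hmK : ((m : ℕ) : K) ≠ 0 := by
    intro h; rw [h] at hm; simp at hm
  have hsep : (Polynomial.X ^ m - Polynomial.C (1 : K)).Separable :=
    Polynomial.separable_X_pow_sub_C 1 hmK one_ne_zero
  have hnodup : (Polynomial.nthRoots m (1 : K)).Nodup := Polynomial.nodup_roots hsep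
  refine ⟨(Polynomial.nthRoots m (1 : K)).toFinset, ?_, ?_, ?_⟩
  · rw [Multiset.toFinset_card_of_nodup hnodup]
    have hsplit : (Polynomial.X ^ m - Polynomial.C (1 : K)).Splits :=
      IsAlgClosed.splits _
    have hcard := (Polynomial.splits_iff_card_roots).1 hsplit
    rw [Polynomial.nthRoots]
    rw [hcard, Polynomial.natDegree_X_pow_sub_C]
    exact hmn
  · intro x hx
    rw [Multiset.mem_toFinset, Polynomial.mem_nthRoots hm0.bot_lt] at hx
    exact v_root_of_unity v hm0 hx
  · intro x hx y hy hxy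
    rw [Multiset.mem_toFinset, Polynomial.mem_nthRoots hm0.bot_lt] at hx hy
    have hy0 : y ≠ 0 := by
      intro h; rw [h] at hy; simp [zero_pow hm0] at hy
    have hδm : (x / y) ^ m = 1 := by rw [div_pow, hx, hy, div_one]
    have hδ1 : x / y ≠ 1 := by
      intro h; exact hxy (by field_simp at h; exact h)
    have hxy' : x - y = (x / y - 1) * y := by field_simp
    rw [hxy', v.map_mul, na_unit_dist v hna hm hδm hδ1, one_mul,
      v_root_of_unity v hm0 hy]

/-- all coefficients have absolute value at most 1 -/
def B1 (g : Polynomial K) : Prop := ∀ k, v (g.coeff k) ≤ 1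

theorem B1.mul (hna : IsNonarchimedean (v : K → ℝ)) {A B : Polynomial K}
    (hA : B1 v A) (hB : B1 v B) : B1 v (A * B) := by
  intro k
  rw [Polynomial.coeff_mul]
  refine na_sum v hna _ _ zero_le_one fun x _ => ?_
  rw [v.map_mul]
  exact mul_le_one₀ (hA x.1) (v.nonneg _) (hB x.2)

theorem B1_one : B1 v (1 : Polynomial K) := by
  intro k
  rcases eq_or_ne k 0 with rfl | hk
  · simp
  · simp [Polynomial.coeff_one, hk]

theorem B1_basisDivisor {x y : K} (hxy : v (x - y) = 1) (hy : v y ≤ 1) :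
    B1 v (Lagrange.basisDivisor x y) := by
  intro k
  rw [Lagrange.basisDivisor, Polynomial.coeff_C_mul, v.map_mul, map_inv₀, hxy, inv_one, one_mul]
  match k with
  | 0 => simpa [Polynomial.coeff_sub] using (map_neg_eq_map v y ▸ hy)
  | 1 => simp [Polynomial.coeff_sub]
  | (k + 2) => simp [Polynomial.coeff_sub, Polynomial.coeff_X, Polynomial.coeff_C]

theorem exists_eval_eq_GP [IsAlgClosed K] (hna : IsNonarchimedean (v : K → ℝ))
    (g : Polynomial K) : ∃ u : K, v u = 1 ∧ v (g.eval u) = GP v g := by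
  classical
  rcases eq_or_ne g 0 with rfl | hg
  · exact ⟨1, v.map_one, by simp [GP_zero]⟩
  obtain ⟨S, hcard, hunit, hdist⟩ := exists_units_finset v hna (g.natDegree + 1)
  have hS : S.Nonempty := Finset.card_pos.1 (by omega)
  have hdeg : g.degree < (S.card : ℕ) := by
    refine lt_of_le_of_lt Polynomial.degree_le_natDegree ?_
    exact_mod_cast Nat.lt_of_lt_of_le (Nat.lt_succ_self _) hcard
  have hinj : Set.InjOn (id : K → K) S := Set.injOn_id _
  have hrep := Lagrange.eq_interpolate (v := (id : K → K)) (s := S) hinj hdeg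
  obtain ⟨k₀, hk₀s, hk₀⟩ := exists_GP v hg
  have hbasis : ∀ i ∈ S, B1 v (Lagrange.basis S id i) := by
    intro i hi
    rw [Lagrange.basis]
    refine Finset.prod_induction _ (B1 v) (fun A B hA hB => B1.mul v hna hA hB) (B1_one v) ?_
    intro j hj
    have hj' : j ∈ S := Finset.mem_of_mem_erase hj
    exact B1_basisDivisor v (hdist i hi j hj' (Finset.ne_of_mem_erase hj).symm)
      (le_of_eq (hunit j hj'))
  have hcoeff : g.coeff k₀ = ∑ i ∈ S, g.eval i * (Lagrange.basis S id i).coeff k₀ := by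
    conv_lhs => rw [hrep]
    rw [Lagrange.interpolate_apply, Polynomial.finset_sum_coeff]
    exact Finset.sum_congr rfl fun i _ => by rw [Polynomial.coeff_C_mul]; rfl
  obtain ⟨u, huS, hu⟩ := IsNonarchimedean.finset_image_add_of_nonempty hna
    (fun i => g.eval i * (Lagrange.basis S id i).coeff k₀) hS
  have h1 : GP v g ≤ v (g.eval u) := by
    calc GP v g = v (g.coeff k₀) := hk₀
      _ = v (∑ i ∈ S, g.eval i * (Lagrange.basis S id i).coeff k₀) := by rw [← hcoeff]
      _ ≤ v (g.eval u * (Lagrange.basis S id u).coeff k₀) := hu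
      _ = v (g.eval u) * v ((Lagrange.basis S id u).coeff k₀) := v.map_mul _ _
      _ ≤ v (g.eval u) * 1 :=
          mul_le_mul_of_nonneg_left (hbasis u huS k₀) (v.nonneg _)
      _ = v (g.eval u) := mul_one _
  exact ⟨u, hunit u huS, le_antisymm (eval_le_GP v hna g u (le_of_eq (hunit u huS))) h1⟩

theorem exists_eval_eq_Gv [IsAlgClosed K] (hna : IsNonarchimedean (v : K → ℝ)) :
    ∀ {n : ℕ} (p : MvPolynomial (Fin n) K),
      ∃ β : Fin n → K, (∀ i, v (β i) = 1) ∧ v (eval β p) = Gv v p := by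
  intro n
  induction n with
  | zero =>
      intro p
      obtain ⟨c, rfl⟩ := MvPolynomial.C_surjective (Fin 0) p
      refine ⟨fun _ => 1, fun i => i.elim0, ?_⟩
      rw [eval_C]
      rcases eq_or_ne c 0 with rfl | hc
      · simpa using (Gv_zero v).symm
      · obtain ⟨m, hm, hm'⟩ := exists_Gv v (by simpa using hc : (C c : MvPolynomial (Fin 0) K) ≠ 0)
        rw [hm']
        have hm0 : m = 0 := Finsupp.ext fun i => i.elim0
        rw [hm0, coeff_C]
        simp
  | succ n ih =>
      intro p
      rcases eq_or_ne p 0 with rfl | hp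
      · obtain ⟨β', hβ', _⟩ := ih 1
        exact ⟨Fin.cons 1 β', fun i => Fin.cases (v.map_one) hβ' i, by simp [Gv_zero]⟩
      set q := finSuccEquiv K n p with hq
      have hcle : ∀ k, Gv v (q.coeff k) ≤ Gv v p := by
        intro k
        refine Gv_le v (Gv_nonneg v p) fun m _ => ?_
        rw [finSuccEquiv_coeff_coeff]
        exact coeff_le_Gv v p _
      obtain ⟨m₀, hm₀, hm₀'⟩ := exists_Gv v hp
      set k₀ := m₀ 0 with hk₀
      have hattain : Gv v (q.coeff k₀) = Gv v p := by
        refine le_antisymm (hcle k₀) ?_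
        have : v (coeff (Finsupp.tail m₀) (q.coeff k₀)) = Gv v p := by
          rw [finSuccEquiv_coeff_coeff, Finsupp.cons_tail, ← hm₀']
        rw [← this]
        exact coeff_le_Gv v _ _
      obtain ⟨β', hβ', hev⟩ := ih (q.coeff k₀)
      set g := q.map (eval β' : MvPolynomial (Fin n) K →+* K) with hg
      have hgk : ∀ k, g.coeff k = eval β' (q.coeff k) := fun k => Polynomial.coeff_map _ _
      have hGP : GP v g = Gv v p := by
        refine le_antisymm (GP_le v (Gv_nonneg v p) fun k _ => ?_) ?_
        · rw [hgk]
          exact le_trans (eval_le_Gv v hna _ β' fun i => le_of_eq (hβ' i)) (hcle k)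
        · calc Gv v p = v (eval β' (q.coeff k₀)) := by rw [hev, hattain]
            _ = v (g.coeff k₀) := by rw [hgk]
            _ ≤ GP v g := coeff_le_GP v g k₀
      obtain ⟨u, hu, hu'⟩ := exists_eval_eq_GP v hna g
      refine ⟨Fin.cons u β', fun i => Fin.cases hu hβ' i, ?_⟩
      rw [eval_eq_eval_mv_eval', ← hq, ← hg, hu', hGP]

theorem coeff_prod_roots_le (hna : IsNonarchimedean (v : K → ℝ)) (s : Multiset K) {ρ : ℝ}
    (hρ : 0 < ρ) (h : ∀ r ∈ s, ρ ≤ v r) (k : ℕ) :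
    v (((s.map fun r => Polynomial.X - Polynomial.C r).prod).coeff k)
      ≤ (s.map fun r => v r).prod / ρ ^ k := by
  classical
  induction s using Multiset.induction_on generalizing k with
  | empty =>
      simp only [Multiset.map_zero, Multiset.prod_zero, Multiset.map_zero]
      rcases eq_or_ne k 0 with rfl | hk
      · simp
      · rw [Polynomial.coeff_one, if_neg (by omega)]
        simp only [v.map_zero]
        positivity
  | cons a s ih =>
      have hprodnn : 0 ≤ (s.map fun r => v r).prod :=
        Multiset.prod_nonneg (by
          intro x hx
          obtain ⟨r, _, rfl⟩ := Multiset.mem_map.1 hx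
          exact v.nonneg r)
      have hva : ρ ≤ v a := h a (Multiset.mem_cons_self a s)
      have ih' : ∀ k, v (((s.map fun r => Polynomial.X - Polynomial.C r).prod).coeff k)
          ≤ (s.map fun r => v r).prod / ρ ^ k :=
        fun k => ih (fun r hr => h r (Multiset.mem_cons_of_mem hr)) k
      set P := (s.map fun r => Polynomial.X - Polynomial.C r).prod with hP
      have hcons : ((a ::ₘ s).map fun r => Polynomial.X - Polynomial.C r).prod
          = (Polynomial.X - Polynomial.C a) * P := by
        rw [Multiset.map_cons, Multiset.prod_cons]
      rw [hcons, Multiset.map_cons, Multiset.prod_cons]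
      have hexpand : (Polynomial.X - Polynomial.C a) * P
          = Polynomial.X * P - Polynomial.C a * P := by ring
      rw [hexpand]
      match k with
      | 0 =>
          rw [Polynomial.coeff_sub, Polynomial.coeff_X_mul_zero, zero_sub, map_neg_eq_map,
            Polynomial.coeff_C_mul, v.map_mul, pow_zero, div_one]
          calc v a * v (P.coeff 0) ≤ v a * ((s.map fun r => v r).prod / ρ ^ 0) :=
                mul_le_mul_of_nonneg_left (ih' 0) (v.nonneg a)
            _ = v a * (s.map fun r => v r).prod := by rw [pow_zero, div_one]
      | (k + 1) =>
          rw [Polynomial.coeff_sub, Polynomial.coeff_X_mul, sub_eq_add_neg]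
          refine le_trans (hna _ _) (max_le ?_ ?_)
          · calc v (P.coeff k) ≤ (s.map fun r => v r).prod / ρ ^ k := ih' k
              _ ≤ v a * (s.map fun r => v r).prod / ρ ^ (k + 1) := by
                  rw [div_le_div_iff₀ (by positivity) (by positivity), pow_succ]
                  have : (s.map fun r => v r).prod * ρ ≤ (s.map fun r => v r).prod * v a :=
                    mul_le_mul_of_nonneg_left hva hprodnn
                  nlinarith [pow_pos hρ k]
          · rw [map_neg_eq_map, Polynomial.coeff_C_mul, v.map_mul]
            calc v a * v (P.coeff (k + 1)) ≤ v a * ((s.map fun r => v r).prod / ρ ^ (k + 1)) :=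
                  mul_le_mul_of_nonneg_left (ih' (k + 1)) (v.nonneg a)
              _ = v a * (s.map fun r => v r).prod / ρ ^ (k + 1) := by ring

theorem eval_smul_of_isHomogeneous {n t : ℕ} (F : MvPolynomial (Fin n) K)
    (hF : F.IsHomogeneous t) (a : K) (x : Fin n → K) :
    eval (a • x) F = a ^ t * eval x F := by
  rw [eval_eq', eval_eq', Finset.mul_sum]
  refine Finset.sum_congr rfl fun d hd => ?_
  have hdt : ∑ i, d i = t := by
    have h1 : Finsupp.degree d = t := by
      have h2 := hF (mem_support_iff.1 hd)
      rw [Finsupp.degree_eq_weight_one]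
      exact h2
    rw [← h1, Finsupp.degree]
    exact (Finset.sum_subset (Finset.subset_univ _)
      fun i _ hni => Finsupp.notMem_support_iff.1 hni).symm
  calc coeff d F * ∏ i, (a • x) i ^ d i
      = coeff d F * ∏ i, (a ^ d i * x i ^ d i) := by
        refine congrArg _ (Finset.prod_congr rfl fun i _ => ?_)
        rw [Pi.smul_apply, smul_eq_mul, mul_pow]
    _ = coeff d F * ((∏ i, a ^ d i) * ∏ i, x i ^ d i) := by rw [Finset.prod_mul_distrib]
    _ = a ^ t * (coeff d F * ∏ i, x i ^ d i) := by
        rw [Finset.prod_pow_eq_pow_sum, hdt]; ring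

theorem iSup_support_eq {n : ℕ} (p : MvPolynomial (Fin n) K) :
    (⨆ m ∈ p.support, v (coeff m p)) = Gv v p := by
  have hb : ∀ m : Fin n →₀ ℕ, (⨆ _ : m ∈ p.support, v (coeff m p)) ≤ Gv v p := fun m =>
    Real.iSup_le (fun _ => coeff_le_Gv v p m) (Gv_nonneg v p)
  refine le_antisymm (Real.iSup_le hb (Gv_nonneg v p)) ?_
  rcases eq_or_ne p 0 with rfl | hp
  · rw [Gv_zero]
    have : ∀ m : Fin n →₀ ℕ, (⨆ _ : m ∈ (0 : MvPolynomial (Fin n) K).support,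
        v (coeff m (0 : MvPolynomial (Fin n) K))) = 0 := by
      intro m
      have : IsEmpty (m ∈ (0 : MvPolynomial (Fin n) K).support) := by
        simp
      exact Real.iSup_of_isEmpty _
    rw [iSup_congr this, ciSup_const]
  · obtain ⟨m₁, hm₁, hval⟩ := exists_Gv v hp
    rw [hval]
    have h1 : v (coeff m₁ p) = ⨆ _ : m₁ ∈ p.support, v (coeff m₁ p) := by
      haveI : Nonempty (m₁ ∈ p.support) := ⟨hm₁⟩
      rw [ciSup_const]
    rw [h1]
    exact le_ciSup (f := fun m => ⨆ _ : m ∈ p.support, v (coeff m p))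
      ⟨Gv v p, by rintro x ⟨m, rfl⟩; exact hb m⟩ m₁

end Stmt13Aux

open Stmt13Aux

/-- Over an algebraically closed field with a nontrivial non-archimedean
absolute value: if `F` is homogeneous of degree `t ≥ 1` with
`F(x_0,…,x_{N-1},0) = ∏ x_i^{e_i}`, and `F = ∑_{j≤t} c_j·x_N^j` with each `c_j`
homogeneous of degree `t-j`, then for `Z` the zero locus of `F`,
`λ(Z) = max_{1 ≤ j ≤ t} (1/j)·log⁺‖c_j‖` where `‖·‖` is the Gauss norm. -/
theorem stmt13 (N : ℕ) (hN : 1 ≤ N) (K : Type*) [Field K] [IsAlgClosed K]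
    (v : AbsoluteValue K ℝ) (hna : IsNonarchimedean (v : K → ℝ))
    (hnt : ∃ x : K, x ≠ 0 ∧ v x ≠ 1)
    (t : ℕ) (ht : 1 ≤ t) (F : MvPolynomial (Fin (N + 1)) K) (hFhom : F.IsHomogeneous t)
    (e : Fin N → ℕ)
    (hF0 : aeval (fun j : Fin (N + 1) =>
        if h : (j : ℕ) < N then (X ⟨(j : ℕ), h⟩ : MvPolynomial (Fin N) K) else 0) F =
      ∏ i : Fin N, X i ^ e i)
    (c : ℕ → MvPolynomial (Fin N) K)
    (hc : F = ∑ j ∈ Finset.range (t + 1),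
      rename Fin.castSucc (c j) * X (Fin.last N) ^ j)
    (hchom : ∀ j ≤ t, (c j).IsHomogeneous (t - j)) :
    lam N v {P | ∃ (x : Fin (N + 1) → K) (hx : x ≠ 0),
        eval x F = 0 ∧ P = Projectivization.mk K x hx} =
      ⨆ j ∈ Finset.Icc 1 t, ENNReal.ofReal
        (Real.log (⨆ m ∈ (c j).support, v (MvPolynomial.coeff m (c j))) / j) := by
  classical
  -- the coefficient of `x_N^0` is the monomial `∏ X i ^ e i`
  have hc0 : c 0 = ∏ i : Fin N, X i ^ e i := by
    rw [hc, map_sum] at hF0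
    have hterm : ∀ j ∈ Finset.range (t + 1),
        aeval (fun j : Fin (N + 1) =>
            if h : (j : ℕ) < N then (X ⟨(j : ℕ), h⟩ : MvPolynomial (Fin N) K) else 0)
          (rename Fin.castSucc (c j) * X (Fin.last N) ^ j) = c j * 0 ^ j := by
      intro j _
      rw [map_mul, map_pow, aeval_X, aeval_rename]
      have hlast : (if h : ((Fin.last N : Fin (N + 1)) : ℕ) < N then
          (X ⟨((Fin.last N : Fin (N + 1)) : ℕ), h⟩ : MvPolynomial (Fin N) K) else 0) = 0 := by
        rw [dif_neg]
        simp
      rw [hlast]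
      congr 1
      have hcomp : ((fun j : Fin (N + 1) =>
          if h : (j : ℕ) < N then (X ⟨(j : ℕ), h⟩ : MvPolynomial (Fin N) K) else 0) ∘
            Fin.castSucc) = X := by
        funext i
        simp only [Function.comp_apply, Fin.coe_castSucc]
        rw [dif_pos i.isLt]
      rw [hcomp]
      exact aeval_X_left_apply (c j)
    rw [Finset.sum_congr rfl hterm, Finset.sum_eq_single 0
      (fun j _ hj => by rw [zero_pow hj, mul_zero])
      (fun h => absurd (Finset.mem_range.2 (by omega)) h)] at hF0
    rw [pow_zero, mul_one] at hF0
    exact hF0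
  have hone : ∀ β' : Fin N → K, (∀ i, v (β' i) = 1) → v (eval β' (c 0)) = 1 := by
    intro β' hβ'
    rw [hc0]
    have h1 : eval β' (∏ i : Fin N, X i ^ e i) = ∏ i : Fin N, β' i ^ e i := by
      rw [map_prod]
      exact Finset.prod_congr rfl fun i _ => by rw [map_pow, eval_X]
    rw [h1, map_prod]
    exact Finset.prod_eq_one fun i _ => by rw [v.map_pow, hβ' i, one_pow]
  have heval : ∀ (β' : Fin N → K) (x : K),
      eval (Fin.snoc β' x) F = ∑ j ∈ Finset.range (t + 1), eval β' (c j) * x ^ j := by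
    intro β' x
    rw [hc, map_sum]
    refine Finset.sum_congr rfl fun j _ => ?_
    rw [map_mul, map_pow, eval_X, eval_rename]
    have h1 : ((Fin.snoc β' x : Fin (N + 1) → K) ∘ Fin.castSucc) = β' := by
      funext i
      simp [Fin.snoc_castSucc]
    have h2 : (Fin.snoc β' x : Fin (N + 1) → K) (Fin.last N) = x := Fin.snoc_last _ _
    rw [h1, h2]
  have hIcc : (Finset.Icc 1 t).Nonempty := ⟨1, by simp [ht]⟩
  have hsplitIcc : Finset.range (t + 1) = insert 0 (Finset.Icc 1 t) := by
    ext k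
    simp only [Finset.mem_range, Finset.mem_insert, Finset.mem_Icc]
    omega
  have h0notin : (0 : ℕ) ∉ Finset.Icc 1 t := by simp
  apply le_antisymm
  · -- upper bound
    unfold lam
    refine iSup_le fun β => iSup_le fun hβ => iSup_le fun hunit => iSup_le fun hβN =>
      iSup_le fun hmem => ?_
    obtain ⟨x, hx, hFx, hmk⟩ := hmem
    obtain ⟨a, ha⟩ := (Projectivization.mk_eq_mk_iff K β x hβ hx).1 hmk
    have hevalβ : eval β F = 0 := by
      rw [← ha, Units.smul_def, eval_smul_of_isHomogeneous F hFhom, hFx, mul_zero]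
    set β' : Fin N → K := fun i => β i.castSucc with hβ'def
    have hsnoc : (Fin.snoc β' (β (Fin.last N)) : Fin (N + 1) → K) = β := Fin.snoc_init_self β
    have hsum : ∑ j ∈ Finset.range (t + 1), eval β' (c j) * β (Fin.last N) ^ j = 0 := by
      rw [← heval, hsnoc, hevalβ]
    have hsum0 : eval β' (c 0) * β (Fin.last N) ^ 0
        = -∑ j ∈ Finset.Icc 1 t, eval β' (c j) * β (Fin.last N) ^ j := by
      rw [hsplitIcc, Finset.sum_insert h0notin] at hsum
      linear_combination hsum
    obtain ⟨j, hjmem, hj⟩ := IsNonarchimedean.finset_image_add_of_nonempty hna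
      (fun j => eval β' (c j) * β (Fin.last N) ^ j) hIcc
    have h1le : (1 : ℝ) ≤ v (eval β' (c j)) * v (β (Fin.last N)) ^ j := by
      calc (1 : ℝ) = v (eval β' (c 0) * β (Fin.last N) ^ 0) := by
            rw [pow_zero, mul_one, hone β' hunit]
        _ = v (∑ j ∈ Finset.Icc 1 t, eval β' (c j) * β (Fin.last N) ^ j) := by
            rw [hsum0, map_neg_eq_map]
        _ ≤ v (eval β' (c j) * β (Fin.last N) ^ j) := hj
        _ = v (eval β' (c j)) * v (β (Fin.last N)) ^ j := by rw [v.map_mul, v.map_pow]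
    have hble : v (eval β' (c j)) ≤ Gv v (c j) :=
      eval_le_Gv v hna (c j) β' fun i => le_of_eq (hunit i)
    have hb0 : 0 < v (β (Fin.last N)) := v.pos hβN
    have hG1 : 1 ≤ Gv v (c j) * v (β (Fin.last N)) ^ j :=
      le_trans h1le (mul_le_mul_of_nonneg_right hble (by positivity))
    have hGpos : 0 < Gv v (c j) := by nlinarith [pow_pos hb0 j, Gv_nonneg v (c j)]
    have hpowle : (v (β (Fin.last N)))⁻¹ ^ j ≤ Gv v (c j) := by
      rw [inv_pow, ← one_div, div_le_iff₀ (pow_pos hb0 j)]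
      linarith [hG1]
    have hj1 : 1 ≤ j := (Finset.mem_Icc.1 hjmem).1
    have hjr : (0 : ℝ) < j := by exact_mod_cast hj1
    have hlog : Real.log ((v (β (Fin.last N)))⁻¹) ≤ Real.log (Gv v (c j)) / j := by
      have h2 := Real.log_le_log (by positivity) hpowle
      rw [Real.log_pow] at h2
      rw [le_div_iff₀ hjr]
      linarith [h2]
    exact le_iSup₂_of_le j hjmem
      (by rw [iSup_support_eq v (c j)]; exact ENNReal.ofReal_le_ofReal hlog)
  · -- lower bound
    refine iSup₂_le fun j hj => ?_
    rw [iSup_support_eq v (c j)]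
    obtain ⟨hj1, hjt⟩ := Finset.mem_Icc.1 hj
    have hjr : (0 : ℝ) < j := by exact_mod_cast hj1
    by_cases hG : Gv v (c j) ≤ 1
    · have hle0 : Real.log (Gv v (c j)) / j ≤ 0 :=
        div_nonpos_of_nonpos_of_nonneg (Real.log_nonpos (Gv_nonneg v (c j)) hG)
          (le_of_lt hjr)
      rw [ENNReal.ofReal_eq_zero.2 hle0]
      exact zero_le
    · push_neg at hG
      obtain ⟨β', hβ', hevalcj⟩ := exists_eval_eq_Gv v hna (c j)
      set g : Polynomial K :=
        ∑ j' ∈ Finset.range (t + 1), Polynomial.C (eval β' (c j')) * Polynomial.X ^ j' with hgdef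
      have hgcoeff : ∀ k, k ≤ t → g.coeff k = eval β' (c k) := by
        intro k hk
        rw [hgdef, Polynomial.finset_sum_coeff,
          Finset.sum_eq_single k
            (fun b _ hbk => by
              rw [Polynomial.coeff_C_mul, Polynomial.coeff_X_pow,
                if_neg (fun hh => hbk hh.symm), mul_zero])
            (fun hk' => absurd (Finset.mem_range.2 (by omega)) hk'),
          Polynomial.coeff_C_mul, Polynomial.coeff_X_pow, if_pos rfl, mul_one]
      have hgeval : ∀ x : K, g.eval x = eval (Fin.snoc β' x) F := by
        intro x
        rw [heval, hgdef, Polynomial.eval_finset_sum]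
        exact Finset.sum_congr rfl fun j' _ => by simp
      have hg0 : v (g.coeff 0) = 1 := by
        rw [hgcoeff 0 (Nat.zero_le t)]
        exact hone β' hβ'
      have hgj : v (g.coeff j) = Gv v (c j) := by rw [hgcoeff j hjt, hevalcj]
      have hgj0 : g.coeff j ≠ 0 := by
        intro h
        rw [h, v.map_zero] at hgj
        linarith
      have hgne : g ≠ 0 := fun h => hgj0 (by simp [h])
      have hsplit : g.Splits := IsAlgClosed.splits g
      have hroots : g.roots.card = g.natDegree := (Polynomial.splits_iff_card_roots).1 hsplit
      have hdeg1 : 1 ≤ g.natDegree :=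
        le_trans hj1 (Polynomial.le_natDegree_of_ne_zero hgj0)
      have hrne : g.roots ≠ 0 := by
        intro h
        rw [h] at hroots
        simp only [Multiset.card_zero] at hroots
        omega
      obtain ⟨r₀, hr₀f, hmin⟩ := Finset.exists_min_image g.roots.toFinset (fun r => v r)
        (by rwa [Multiset.toFinset_nonempty])
      have hr₀mem : r₀ ∈ g.roots := Multiset.mem_toFinset.1 hr₀f
      have hminall : ∀ r ∈ g.roots, v r₀ ≤ v r := fun r hr =>
        hmin r (Multiset.mem_toFinset.2 hr)
      have hcoeff0ne : g.coeff 0 ≠ 0 := by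
        intro h
        rw [h, v.map_zero] at hg0
        linarith
      have hroot0 : ∀ r ∈ g.roots, r ≠ 0 := by
        intro r hr h0
        have := Polynomial.isRoot_of_mem_roots hr
        rw [h0] at this
        exact hcoeff0ne (by rw [Polynomial.coeff_zero_eq_eval_zero]; exact this)
      have hρ : 0 < v r₀ := v.pos (hroot0 _ hr₀mem)
      have hfact := Polynomial.Splits.eq_prod_roots hsplit
      have hprod0 : v ((g.roots.map fun a => Polynomial.X - Polynomial.C a).prod.coeff 0)
          = (g.roots.map fun r => v r).prod := by
        rw [Polynomial.coeff_zero_eq_eval_zero, Polynomial.eval_multiset_prod]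
        have h3 : (g.roots.map fun a => Polynomial.X - Polynomial.C a).map
            (Polynomial.eval 0) = g.roots.map fun a => -a := by
          rw [Multiset.map_map]
          exact Multiset.map_congr rfl fun a _ => by simp
        rw [h3, map_multiset_prod, Multiset.map_map]
        exact congrArg _ (Multiset.map_congr rfl fun a _ => map_neg_eq_map v a)
      have h2 : v (g.coeff 0) = v g.leadingCoeff * (g.roots.map fun r => v r).prod := by
        conv_lhs => rw [hfact]
        rw [Polynomial.coeff_C_mul, v.map_mul, hprod0]
      have h1 : v (g.coeff j) ≤ v (g.coeff 0) / (v r₀) ^ j := by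
        conv_lhs => rw [hfact]
        rw [Polynomial.coeff_C_mul, v.map_mul, h2, mul_div_assoc]
        exact mul_le_mul_of_nonneg_left
          (coeff_prod_roots_le v hna g.roots hρ hminall j) (v.nonneg _)
      have hkey : Gv v (c j) ≤ ((v r₀)⁻¹) ^ j := by
        rw [← hgj]
        calc v (g.coeff j) ≤ v (g.coeff 0) / (v r₀) ^ j := h1
          _ = ((v r₀)⁻¹) ^ j := by rw [hg0, inv_pow, one_div]
      have hlog2 : Real.log (Gv v (c j)) / j ≤ Real.log ((v r₀)⁻¹) := by
        have h4 := Real.log_le_log (lt_trans zero_lt_one hG) hkey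
        rw [Real.log_pow] at h4
        rw [div_le_iff₀ hjr]
        linarith [h4]
      -- construct the witness
      set β : Fin (N + 1) → K := Fin.snoc β' r₀ with hβdef
      have hβlast : β (Fin.last N) = r₀ := Fin.snoc_last _ _
      have hβunit : ∀ i : Fin N, v (β i.castSucc) = 1 := by
        intro i
        rw [hβdef]
        rw [Fin.snoc_castSucc]
        exact hβ' i
      have hβ0 : β ≠ 0 := fun h =>
        (hroot0 _ hr₀mem) (by rw [← hβlast, h, Pi.zero_apply])
      have hβlastne : β (Fin.last N) ≠ 0 := by
        rw [hβlast]
        exact hroot0 _ hr₀mem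
      have hFβ : eval β F = 0 := by
        rw [hβdef, ← hgeval r₀]
        exact Polynomial.isRoot_of_mem_roots hr₀mem
      have hmemZ : Projectivization.mk K β hβ0 ∈ {P | ∃ (x : Fin (N + 1) → K) (hx : x ≠ 0),
          eval x F = 0 ∧ P = Projectivization.mk K x hx} := ⟨β, hβ0, hFβ, rfl⟩
      calc ENNReal.ofReal (Real.log (Gv v (c j)) / j)
          ≤ ENNReal.ofReal (Real.log ((v (β (Fin.last N)))⁻¹)) := by
            rw [hβlast]
            exact ENNReal.ofReal_le_ofReal hlog2
        _ ≤ lam N v {P | ∃ (x : Fin (N + 1) → K) (hx : x ≠ 0),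
              eval x F = 0 ∧ P = Projectivization.mk K x hx} := by
            unfold lam
            exact le_iSup_of_le β (le_iSup_of_le hβ0 (le_iSup_of_le hβunit
              (le_iSup_of_le hβlastne (le_iSup_of_le hmemZ le_rfl))))
end

section
/- Let g ∈ ℂ[z] have degree e ≥ 1, with coefficients a_0, a_1, …, a_e (so a_e ≠ 0). Define N(g) = max_{0 ≤ i < e} (|a_i|/|a_e|)^{1/(e−i)} and M(g) = max{|β| : β ∈ ℂ, g(β) = 0}. Then M(g)/e ≤ N(g) ≤ e·exp(1)·M(g); equivalently, log M(g) − log e ≤ log N(g) ≤ log M(g) + log e + 1 whenever these logarithms are defined. -/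
noncomputable section

/-- `N(g) = max_{0 ≤ i < e} (|a_i|/|a_e|)^{1/(e-i)}` for `g` of degree `e` with
coefficients `a_i`. -/
def Ng (g : Polynomial ℂ) : ℝ :=
  ⨆ i : Fin g.natDegree,
    (‖g.coeff i‖ / ‖g.leadingCoeff‖) ^
      (((g.natDegree : ℝ) - ((i : ℕ) : ℝ)))⁻¹

/-- `M(g) = max {|β| : g(β) = 0}`. -/
def Mg (g : Polynomial ℂ) : ℝ :=
  ⨆ β : {z : ℂ // g.IsRoot z}, ‖(β : ℂ)‖

end

private lemma abs_multiset_prod_le (M : ℝ) (hM : 0 ≤ M) (t : Multiset ℂ)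
    (h : ∀ x ∈ t, ‖x‖ ≤ M) :
    ‖t.prod‖ ≤ M ^ Multiset.card t := by
  induction t using Multiset.induction_on with
  | empty => simp
  | cons a s ih =>
    rw [Multiset.prod_cons, norm_mul, Multiset.card_cons, pow_succ, mul_comm (M ^ _) M]
    exact mul_le_mul (h a (Multiset.mem_cons_self a s))
      (ih fun x hx => h x (Multiset.mem_cons_of_mem hx))
      (by positivity) hM

private lemma abs_esymm_le (s : Multiset ℂ) (M : ℝ) (hM : 0 ≤ M)
    (h : ∀ x ∈ s, ‖x‖ ≤ M) (k : ℕ) :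
    ‖s.esymm k‖ ≤ ((Multiset.card s).choose k) * M ^ k := by
  rw [Multiset.esymm]
  calc ‖(Multiset.map Multiset.prod (s.powersetCard k)).sum‖
      ≤ ((Multiset.map Multiset.prod (s.powersetCard k)).map (fun x => ‖x‖)).sum := by
        exact
          norm_multiset_sum_le (Multiset.map Multiset.prod (s.powersetCard k))
    _ ≤ Multiset.card ((Multiset.map Multiset.prod (s.powersetCard k)).map (fun x => ‖x‖))
          • (M ^ k) := by
        apply Multiset.sum_le_card_nsmul
        intro x hx
        simp only [Multiset.mem_map] at hx
        obtain ⟨y, ⟨t, ht, rfl⟩, rfl⟩ := hx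
        rw [Multiset.mem_powersetCard] at ht
        rw [← ht.2]
        exact abs_multiset_prod_le M hM t fun x hx => h x (Multiset.mem_of_le ht.1 hx)
    _ = ((Multiset.card s).choose k) * M ^ k := by
        rw [Multiset.card_map, Multiset.card_map, Multiset.card_powersetCard, nsmul_eq_mul]

/-- For `g ∈ ℂ[z]` of degree `e ≥ 1`,
`M(g)/e ≤ N(g) ≤ e·exp(1)·M(g)`. -/
theorem stmt14 (g : Polynomial ℂ) (hg : 1 ≤ g.natDegree) :
    Mg g / (g.natDegree : ℝ) ≤ Ng g ∧
    Ng g ≤ (g.natDegree : ℝ) * Real.exp 1 * Mg g := by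
  set e := g.natDegree with he
  have hg0 : g ≠ 0 := fun h => by
    rw [he, h, Polynomial.natDegree_zero] at hg; omega
  have hdeg : 0 < g.degree := Polynomial.natDegree_pos_iff_degree_pos.mp hg
  have hL : 0 < ‖g.leadingCoeff‖ := by
    simpa using Polynomial.leadingCoeff_ne_zero.mpr hg0
  set L := ‖g.leadingCoeff‖ with hLdef
  have hroots : Multiset.card g.roots = e :=
    Polynomial.splits_iff_card_roots.mp (IsAlgClosed.splits g)
  haveI : Finite {z : ℂ // g.IsRoot z} := (Polynomial.finite_setOf_isRoot hg0).to_subtype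
  haveI : Nonempty {z : ℂ // g.IsRoot z} := by
    obtain ⟨z, hz⟩ := Complex.exists_root hdeg
    exact ⟨⟨z, hz⟩⟩
  have hbddM : BddAbove (Set.range fun β : {z : ℂ // g.IsRoot z} => ‖(β : ℂ)‖) :=
    (Set.finite_range _).bddAbove
  have hMroot : ∀ z : ℂ, g.IsRoot z → ‖z‖ ≤ Mg g := fun z hz =>
    le_ciSup hbddM (⟨z, hz⟩ : {z : ℂ // g.IsRoot z})
  have hM0 : 0 ≤ Mg g := by
    obtain ⟨z, hz⟩ := Complex.exists_root hdeg
    exact le_trans (norm_nonneg z) (hMroot z hz)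
  haveI : Nonempty (Fin e) := ⟨⟨0, hg⟩⟩
  have hbddN : BddAbove (Set.range fun i : Fin e =>
      (‖g.coeff i‖ / L) ^ (((e : ℝ) - ((i : ℕ) : ℝ)))⁻¹) :=
    (Set.finite_range _).bddAbove
  have hkcast : ∀ i : Fin e, ((e : ℝ) - ((i : ℕ) : ℝ)) = ((e - (i : ℕ) : ℕ) : ℝ) := by
    intro i
    have := i.isLt
    push_cast [Nat.cast_sub this.le]
    ring
  -- upper bound for each term of N
  have hterm : ∀ i : Fin e,
      (‖g.coeff i‖ / L) ^ (((e : ℝ) - ((i : ℕ) : ℝ)))⁻¹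
        ≤ (e : ℝ) * Mg g := by
    intro i
    have hik : (i : ℕ) < e := i.isLt
    set k := e - (i : ℕ) with hk
    have hk0 : k ≠ 0 := by omega
    have habs : ‖g.coeff i‖ = L * ‖g.roots.esymm k‖ := by
      have hvieta := Polynomial.coeff_eq_esymm_roots_of_card hroots (k := (i : ℕ)) hik.le
      rw [hvieta, norm_mul, norm_mul, norm_pow, norm_neg, norm_one, one_pow, mul_one]
    have hrootmem : ∀ x ∈ g.roots, ‖x‖ ≤ Mg g := fun x hx =>
      hMroot x (Polynomial.isRoot_of_mem_roots hx)
    have hesymm : ‖g.roots.esymm k‖ ≤ ((e : ℝ) * Mg g) ^ k := by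
      calc ‖g.roots.esymm k‖
          ≤ ((Multiset.card g.roots).choose k) * Mg g ^ k :=
            abs_esymm_le g.roots (Mg g) hM0 hrootmem k
        _ ≤ (e : ℝ) ^ k * Mg g ^ k := by
            apply mul_le_mul_of_nonneg_right _ (by positivity)
            rw [hroots]
            exact_mod_cast Nat.cast_le.mpr (Nat.choose_le_pow e k)
        _ = ((e : ℝ) * Mg g) ^ k := (mul_pow _ _ _).symm
    have hcoeff : ‖g.coeff i‖ / L ≤ ((e : ℝ) * Mg g) ^ k := by
      rw [habs, mul_comm, mul_div_assoc, div_self (ne_of_gt hL), mul_one]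
      exact hesymm
    calc (‖g.coeff i‖ / L) ^ (((e : ℝ) - ((i : ℕ) : ℝ)))⁻¹
        ≤ (((e : ℝ) * Mg g) ^ k) ^ (((e : ℝ) - ((i : ℕ) : ℝ)))⁻¹ := by
          apply Real.rpow_le_rpow (by positivity) hcoeff
          rw [hkcast i]
          positivity
      _ = (e : ℝ) * Mg g := by
          rw [hkcast i]
          exact Real.pow_rpow_inv_natCast (by positivity) hk0
  -- N ≥ 0
  have hN0 : 0 ≤ Ng g := by
    refine le_trans ?_ (le_ciSup hbddN (⟨0, hg⟩ : Fin e))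
    positivity
  have hNle : Ng g ≤ (e : ℝ) * Mg g := ciSup_le hterm
  constructor
  · -- lower bound:  Mg g / e ≤ Ng g
    rcases le_or_gt (Mg g) (Ng g) with hMN | hMN
    · calc Mg g / (e : ℝ) ≤ Mg g := by
            apply div_le_self hM0
            exact_mod_cast hg
        _ ≤ Ng g := hMN
    · -- Ng g < Mg g ; pick root of maximal modulus
      have hMpos : 0 < Mg g := lt_of_le_of_lt hN0 hMN
      obtain ⟨β₀, hβ₀⟩ := Finite.exists_max
        (fun β : {z : ℂ // g.IsRoot z} => ‖(β : ℂ)‖)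
      have hMeq : Mg g = ‖(β₀ : ℂ)‖ :=
        le_antisymm (ciSup_le hβ₀) (le_ciSup hbddM β₀)
      -- coefficient bounds from N
      have hci : ∀ i : Fin e, ‖g.coeff i‖ ≤ L * Ng g ^ (e - (i : ℕ)) := by
        intro i
        have hik : (i : ℕ) < e := i.isLt
        have hk0 : e - (i : ℕ) ≠ 0 := by omega
        have ht : (‖g.coeff i‖ / L) ^ (((e : ℝ) - ((i : ℕ) : ℝ)))⁻¹ ≤ Ng g :=
          le_ciSup hbddN i
        have hp : ‖g.coeff i‖ / L ≤ Ng g ^ (e - (i : ℕ)) := by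
          have := pow_le_pow_left₀ (by positivity) ht (e - (i : ℕ))
          rwa [hkcast i, Real.rpow_inv_natCast_pow (by positivity) hk0] at this
        rw [div_le_iff₀ hL] at hp
        linarith [hp, mul_comm (Ng g ^ (e - (i : ℕ))) L]
      -- evaluation at β₀
      have heval : g.leadingCoeff * (β₀ : ℂ) ^ e
          = -∑ i ∈ Finset.range e, g.coeff i * (β₀ : ℂ) ^ i := by
        have h0 : g.eval (β₀ : ℂ) = 0 := β₀.2
        rw [Polynomial.eval_eq_sum_range, Finset.sum_range_succ, ← he,
          Polynomial.coeff_natDegree] at h0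
        linear_combination h0
      have key : L * Mg g ^ e ≤ (e : ℝ) * (L * (Ng g * Mg g ^ (e - 1))) := by
        calc L * Mg g ^ e = ‖g.leadingCoeff * (β₀ : ℂ) ^ e‖ := by
              rw [norm_mul, norm_pow, hMeq]
          _ = ‖∑ i ∈ Finset.range e, g.coeff i * (β₀ : ℂ) ^ i‖ := by
              rw [heval, norm_neg]
          _ ≤ ∑ i ∈ Finset.range e, ‖g.coeff i * (β₀ : ℂ) ^ i‖ :=
              norm_sum_le _ _
          _ ≤ ∑ i ∈ Finset.range e, L * (Ng g * Mg g ^ (e - 1)) := by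
              apply Finset.sum_le_sum
              intro i hi
              rw [Finset.mem_range] at hi
              rw [norm_mul, norm_pow, ← hMeq]
              calc ‖g.coeff i‖ * Mg g ^ i
                  ≤ (L * Ng g ^ (e - i)) * Mg g ^ i := by
                    apply mul_le_mul_of_nonneg_right (hci ⟨i, hi⟩) (by positivity)
                _ ≤ L * (Ng g * Mg g ^ (e - 1)) := by
                    have h1 : e - i = (e - 1 - i) + 1 := by omega
                    have h2 : Ng g ^ (e - 1 - i) ≤ Mg g ^ (e - 1 - i) :=
                      pow_le_pow_left₀ hN0 hMN.le _
                    have h3 : Mg g ^ (e - 1 - i) * Mg g ^ i = Mg g ^ (e - 1) := by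
                      rw [← pow_add]
                      congr 1
                      omega
                    calc (L * Ng g ^ (e - i)) * Mg g ^ i
                        = L * (Ng g * (Ng g ^ (e - 1 - i) * Mg g ^ i)) := by
                          rw [h1, pow_succ]
                          ring
                      _ ≤ L * (Ng g * (Mg g ^ (e - 1 - i) * Mg g ^ i)) := by
                          apply mul_le_mul_of_nonneg_left _ hL.le
                          apply mul_le_mul_of_nonneg_left _ hN0
                          apply mul_le_mul_of_nonneg_right h2 (by positivity)
                      _ = L * (Ng g * Mg g ^ (e - 1)) := by rw [h3]
          _ = (e : ℝ) * (L * (Ng g * Mg g ^ (e - 1))) := by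
              rw [Finset.sum_const, Finset.card_range, nsmul_eq_mul]
      -- conclude
      have hMe : Mg g ^ e = Mg g * Mg g ^ (e - 1) := by
        conv_lhs => rw [show e = (e - 1) + 1 by omega]
        rw [pow_succ]
        ring
      rw [hMe] at key
      have hMpow : 0 < Mg g ^ (e - 1) := by positivity
      have : Mg g ≤ (e : ℝ) * Ng g := by
        have h4 : L * (Mg g * Mg g ^ (e - 1)) = (L * Mg g ^ (e - 1)) * Mg g := by ring
        have h5 : (e : ℝ) * (L * (Ng g * Mg g ^ (e - 1)))
            = (L * Mg g ^ (e - 1)) * ((e : ℝ) * Ng g) := by ring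
        rw [h4, h5] at key
        exact le_of_mul_le_mul_left key (by positivity)
      rw [div_le_iff₀ ((Nat.cast_pos (α := ℝ)).mpr (by omega : 0 < e))]
      linarith
  · -- upper bound
    calc Ng g ≤ (e : ℝ) * Mg g := hNle
      _ ≤ (e : ℝ) * Real.exp 1 * Mg g := by
          have h1 : (1 : ℝ) ≤ Real.exp 1 := by
            have := Real.add_one_le_exp (1 : ℝ)
            linarith
          have : (e : ℝ) ≤ (e : ℝ) * Real.exp 1 := by
            nlinarith [(Nat.cast_pos (α := ℝ)).mpr (by omega : 0 < e)]
          nlinarith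
end

section
/- For all integers N ≥ 1 and t ≥ 1 there is a real constant c, depending only on Nize and t, with the following property: let F = ∑_I b_I x_0^{I_0}⋯x_N^{I_N} ∈ ℂ[x_0,…,x_N] be homogeneous of degree t with F(x_0,…,x_{N−1},0) = ∏_{i=0}^{N−1} x_i^{e_i}, and with b_I ≠ 0 for at least one multi-index I with I_N > 0. Then, for Z the zero locus of F in ℙ^N(ℂ), one has |λ(Z) − log⁺ max{|b_I|^{1/I_N} : I_N > 0}| ≤ c. -/
open MvPolynomial Filter Topology
open scoped ENNReal

noncomputable abbrev Complex.abs : AbsoluteValue ℂ ℝ := NormedField.toAbsoluteValue ℂ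

lemma Complex.abs_natCast (n : ℕ) : Complex.abs (n : ℂ) = n := RCLike.norm_natCast (K := ℂ) n

lemma chooseLe (n k : ℕ) : n.choose k ≤ 2 ^ n := by
  rcases le_or_gt k n with h | h
  · calc n.choose k ≤ ∑ m ∈ Finset.range (n+1), n.choose m :=
        Finset.single_le_sum (fun i _ => Nat.zero_le _) (Finset.mem_range.mpr (by omega))
    _ = 2 ^ n := Nat.sum_range_choose n
  · rw [Nat.choose_eq_zero_of_lt h]; exact Nat.zero_le _

/-- If all roots of `p` have modulus ≥ ρ, then `|p.coeff k| * ρ^k ≤ choose(deg,k) * |p.coeff 0|`. -/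
lemma lemA : ∀ (n : ℕ) (p : Polynomial ℂ), p ≠ 0 → p.natDegree = n →
    ∀ (ρ : ℝ), 0 ≤ ρ → (∀ z, p.eval z = 0 → ρ ≤ Complex.abs z) → ∀ (k : ℕ),
    Complex.abs (p.coeff k) * ρ ^ k ≤ (n.choose k) * Complex.abs (p.coeff 0) := by
  intro n
  induction n with
  | zero =>
    intro p hp hd ρ hρ hroots k
    rcases k with _ | k
    · simp
    · rw [Polynomial.coeff_eq_zero_of_natDegree_lt (p := p) (n := k + 1) (by omega)]
      simp only [map_zero, zero_mul]
      positivity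
  | succ n ih =>
    intro p hp hd ρ hρ hroots k
    have hdeg : 0 < p.degree := by
      rw [Polynomial.degree_eq_natDegree hp, hd]; exact_mod_cast Nat.succ_pos n
    obtain ⟨r, hr⟩ := Complex.exists_root hdeg
    have hdvd : (Polynomial.X - Polynomial.C r) ∣ p := Polynomial.dvd_iff_isRoot.mpr hr
    obtain ⟨q, hq⟩ := hdvd
    have hq0 : q ≠ 0 := fun h => hp (by rw [hq, h, mul_zero])
    have hXC : (Polynomial.X - Polynomial.C r) ≠ 0 := Polynomial.X_sub_C_ne_zero r
    have hqd : q.natDegree = n := by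
      have := Polynomial.natDegree_mul hXC hq0
      rw [← hq, hd, Polynomial.natDegree_X_sub_C] at this
      omega
    have hqroots : ∀ z, q.eval z = 0 → ρ ≤ Complex.abs z := by
      intro z hz
      exact hroots z (by rw [hq, Polynomial.eval_mul, hz, mul_zero])
    have hρr : ρ ≤ Complex.abs r := hroots r hr
    have hc0 : p.coeff 0 = -r * q.coeff 0 := by
      rw [hq, Polynomial.mul_coeff_zero]
      simp [Polynomial.coeff_sub]
    have habs0 : Complex.abs (p.coeff 0) = Complex.abs r * Complex.abs (q.coeff 0) := by
      rw [hc0, map_mul, AbsoluteValue.map_neg]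
    rcases k with _ | k
    · simp
    · have hck : p.coeff (k+1) = q.coeff k - r * q.coeff (k+1) := by
        rw [hq, sub_mul, Polynomial.coeff_sub, Polynomial.coeff_X_mul, Polynomial.coeff_C_mul]
      have h1 := ih q hq0 hqd ρ hρ hqroots k
      have h2 := ih q hq0 hqd ρ hρ hqroots (k+1)
      have habs : Complex.abs (p.coeff (k+1)) ≤ Complex.abs (q.coeff k) + Complex.abs r * Complex.abs (q.coeff (k+1)) := by
        rw [hck]
        calc _ ≤ Complex.abs (q.coeff k) + Complex.abs (r * q.coeff (k+1)) :=
              AbsoluteValue.sub_le_add _ _ _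
        _ = _ := by rw [map_mul]
      have hρk : (0:ℝ) ≤ ρ ^ k := by positivity
      have key : Complex.abs (p.coeff (k+1)) * ρ ^ (k+1) ≤
          (Complex.abs (q.coeff k) * ρ ^ k) * ρ + Complex.abs r * (Complex.abs (q.coeff (k+1)) * ρ^(k+1)) := by
        have := mul_le_mul_of_nonneg_right habs (by positivity : (0:ℝ) ≤ ρ^(k+1))
        calc Complex.abs (p.coeff (k+1)) * ρ ^ (k+1) ≤ _ := this
          _ = (Complex.abs (q.coeff k) * ρ ^ k) * ρ + Complex.abs r * (Complex.abs (q.coeff (k+1)) * ρ^(k+1)) := by ring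
      have hchoose : ((n+1).choose (k+1) : ℝ) = (n.choose k : ℝ) + (n.choose (k+1) : ℝ) := by
        rw [Nat.choose_succ_succ]; push_cast; ring
      calc Complex.abs (p.coeff (k+1)) * ρ ^ (k+1) ≤
            (Complex.abs (q.coeff k) * ρ ^ k) * ρ + Complex.abs r * (Complex.abs (q.coeff (k+1)) * ρ^(k+1)) := key
        _ ≤ ((n.choose k) * Complex.abs (q.coeff 0)) * Complex.abs r
            + Complex.abs r * ((n.choose (k+1)) * Complex.abs (q.coeff 0)) := by
            refine add_le_add (mul_le_mul h1 hρr hρ (by positivity)) ?_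
            exact mul_le_mul_of_nonneg_left h2 (by positivity)
        _ = ((n+1).choose (k+1)) * Complex.abs (p.coeff 0) := by
            rw [habs0, hchoose]; ring

lemma geomAux (ζ : ℂ) (n : ℕ) (h : IsPrimitiveRoot ζ n) (d : ℕ) :
    ∑ s ∈ Finset.range n, ζ ^ (d * s) = if n ∣ d then (n : ℂ) else 0 := by
  split_ifs with hd
  · obtain ⟨c, rfl⟩ := hd
    have h1 : ∀ s, ζ ^ (n * c * s) = 1 := fun s => by
      rw [mul_assoc, pow_mul, h.pow_eq_one, one_pow]
    calc ∑ s ∈ Finset.range n, ζ ^ (n * c * s) = ∑ _s ∈ Finset.range n, (1:ℂ) :=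
          Finset.sum_congr rfl fun s _ => h1 s
      _ = n := by simp
  · have h1 : ζ ^ d ≠ 1 := fun hh => hd ((h.pow_eq_one_iff_dvd d).mp hh)
    have h2 : (ζ ^ d) ^ n = 1 := by rw [← pow_mul, mul_comm, pow_mul, h.pow_eq_one, one_pow]
    simp_rw [pow_mul]
    rw [geom_sum_eq h1 n, h2, sub_self, zero_div]

lemma exists_unit_point {ι : Type*} [DecidableEq ι] (N t : ℕ) (T : Finset ι) (d : ι → Fin N → ℕ)
    (hd : ∀ m ∈ T, ∀ j, d m j ≤ t) (hinj : Set.InjOn d T)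
    (b : ι → ℂ) (m₀ : ι) (h₀ : m₀ ∈ T) :
    ∃ y : Fin N → ℂ, (∀ j, Complex.abs (y j) = 1) ∧
      Complex.abs (b m₀) ≤ Complex.abs (∑ m ∈ T, b m * ∏ j, y j ^ (d m j)) := by
  classical
  set n : ℕ := t + 1 with hn
  set ζ : ℂ := Complex.exp ((2 * Real.pi / n : ℝ) * Complex.I) with hζdef
  have hζ : IsPrimitiveRoot ζ n := by
    have := Complex.isPrimitiveRoot_exp n (by omega)
    convert this using 2
    push_cast
    ring
  have habsζ : Complex.abs ζ = 1 := Complex.norm_exp_ofReal_mul_I _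
  set G : (Fin N → Fin n) → ℂ := fun x => ∑ m ∈ T, b m * ∏ j, (ζ ^ (x j : ℕ)) ^ (d m j) with hG
  set tw : (Fin N → Fin n) → ℂ := fun x => ∏ j, ζ ^ ((n - d m₀ j) * (x j : ℕ)) with htw
  have key : ∑ x : Fin N → Fin n, G x * tw x = (n : ℂ) ^ N * b m₀ := by
    have step1 : ∀ x : Fin N → Fin n, G x * tw x
        = ∑ m ∈ T, b m * ∏ j, ζ ^ ((d m j + (n - d m₀ j)) * (x j : ℕ)) := by
      intro x
      rw [hG, Finset.sum_mul]
      refine Finset.sum_congr rfl fun m hm => ?_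
      rw [mul_assoc, ← Finset.prod_mul_distrib]
      congr 1
      refine Finset.prod_congr rfl fun j _ => ?_
      rw [← pow_mul, ← pow_add]
      congr 1
      ring
    simp_rw [step1]
    rw [Finset.sum_comm]
    have inner : ∀ m ∈ T, ∑ x : Fin N → Fin n, b m * ∏ j, ζ ^ ((d m j + (n - d m₀ j)) * (x j : ℕ))
        = if m = m₀ then (n:ℂ)^N * b m₀ else 0 := by
      intro m hm
      rw [← Finset.mul_sum]
      have swap : ∑ x : Fin N → Fin n, ∏ j, ζ ^ ((d m j + (n - d m₀ j)) * (x j : ℕ))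
          = ∏ j, ∑ s : Fin n, ζ ^ ((d m j + (n - d m₀ j)) * (s : ℕ)) := by
        rw [Finset.prod_univ_sum]
        rw [Fintype.piFinset_univ]
      rw [swap]
      have inner2 : ∀ j, ∑ s : Fin n, ζ ^ ((d m j + (n - d m₀ j)) * (s : ℕ))
          = if d m j = d m₀ j then (n : ℂ) else 0 := by
        intro j
        rw [Fin.sum_univ_eq_sum_range (fun s => ζ ^ ((d m j + (n - d m₀ j)) * s))]
        rw [geomAux ζ n hζ]
        have h1 : d m j ≤ t := hd m hm j
        have h2 : d m₀ j ≤ t := hd m₀ h₀ j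
        have hD : (n ∣ d m j + (n - d m₀ j)) ↔ d m j = d m₀ j := by
          constructor
          · intro hdvd
            have hle : n ≤ d m j + (n - d m₀ j) := Nat.le_of_dvd (by omega) hdvd
            have hlt : d m j + (n - d m₀ j) < n + n := by omega
            obtain ⟨c, hc⟩ := hdvd
            rcases c with _ | _ | c
            · omega
            · have : n * 1 = n := Nat.mul_one n
              omega
            · have h4 : n * (c + 1 + 1) = n * c + n + n := by ring
              have h3 : 0 ≤ n * c := Nat.zero_le _
              omega
          · intro he
            exact ⟨1, by omega⟩
        rw [if_congr hD rfl rfl]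
      simp_rw [inner2]
      by_cases hmm : m = m₀
      · subst hmm
        simp only [if_pos rfl, Finset.prod_const, Finset.card_univ, Fintype.card_fin]
        push_cast
        ring
      · have hex : ∃ j, d m j ≠ d m₀ j := by
          by_contra hc
          push_neg at hc
          exact hmm (hinj hm h₀ (funext hc))
        obtain ⟨j, hj⟩ := hex
        rw [if_neg hmm]
        have : (∏ x : Fin N, if d m x = d m₀ x then (n:ℂ) else 0) = 0 :=
          Finset.prod_eq_zero (Finset.mem_univ j) (if_neg hj)
        rw [this, mul_zero]
    rw [Finset.sum_congr rfl inner, Finset.sum_ite_eq' T m₀ (fun _ => (n:ℂ)^N * b m₀), if_pos h₀]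
  have habstw : ∀ x, Complex.abs (tw x) = 1 := by
    intro x
    rw [htw]
    simp only [map_prod, map_pow, habsζ, one_pow, Finset.prod_const_one]
  have hbound : (n:ℝ)^N * Complex.abs (b m₀) ≤ ∑ x : Fin N → Fin n, Complex.abs (G x) := by
    calc (n:ℝ)^N * Complex.abs (b m₀) = Complex.abs ((n:ℂ)^N * b m₀) := by
          rw [map_mul, map_pow, Complex.abs_natCast]
      _ = Complex.abs (∑ x : Fin N → Fin n, G x * tw x) := by rw [key]
      _ ≤ ∑ x : Fin N → Fin n, Complex.abs (G x * tw x) := Complex.abs.sum_le _ _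
      _ = ∑ x : Fin N → Fin n, Complex.abs (G x) := by
          refine Finset.sum_congr rfl fun x _ => ?_
          rw [map_mul, habstw, mul_one]
  have hex : ∃ x : Fin N → Fin n, Complex.abs (b m₀) ≤ Complex.abs (G x) := by
    by_contra hc
    push_neg at hc
    have hne : (Finset.univ : Finset (Fin N → Fin n)).Nonempty :=
      @Finset.univ_nonempty _ _ ⟨fun _ => ⟨0, Nat.succ_pos t⟩⟩
    have hlt : ∑ x : Fin N → Fin n, Complex.abs (G x) < ∑ _x : Fin N → Fin n, Complex.abs (b m₀) :=
      Finset.sum_lt_sum_of_nonempty hne (fun x _ => hc x)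
    rw [Finset.sum_const, Finset.card_univ, Fintype.card_fun] at hlt
    simp only [Fintype.card_fin, nsmul_eq_mul] at hlt
    have : (n:ℝ)^N * Complex.abs (b m₀) < (n:ℝ)^N * Complex.abs (b m₀) := by
      calc (n:ℝ)^N * Complex.abs (b m₀) ≤ _ := hbound
        _ < (n^N : ℕ) * Complex.abs (b m₀) := hlt
        _ = (n:ℝ)^N * Complex.abs (b m₀) := by push_cast; ring
    exact lt_irrefl _ this
  obtain ⟨x, hx⟩ := hex
  exact ⟨fun j => ζ ^ (x j : ℕ), fun j => by rw [map_pow, habsζ, one_pow], hx⟩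


noncomputable def Pb (N : ℕ) (F : MvPolynomial (Fin (N+1)) ℂ) (y : Fin N → ℂ) : Polynomial ℂ :=
  ∑ m ∈ F.support, Polynomial.C (coeff m F * ∏ j : Fin N, y j ^ (m (Fin.castSucc j))) *
    Polynomial.X ^ (m (Fin.last N))

lemma Pb_eval (N : ℕ) (F : MvPolynomial (Fin (N+1)) ℂ) (y : Fin N → ℂ) (z : ℂ) :
    (Pb N F y).eval z = eval (Fin.snoc y z) F := by
  rw [Pb, Polynomial.eval_finset_sum, eval_eq']
  refine Finset.sum_congr rfl fun m _ => ?_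
  rw [Polynomial.eval_mul, Polynomial.eval_C, Polynomial.eval_pow, Polynomial.eval_X,
    Fin.prod_univ_castSucc]
  simp only [Fin.snoc_castSucc, Fin.snoc_last]
  ring

lemma Pb_coeff (N : ℕ) (F : MvPolynomial (Fin (N+1)) ℂ) (y : Fin N → ℂ) (k : ℕ) :
    (Pb N F y).coeff k = ∑ m ∈ F.support.filter (fun m => m (Fin.last N) = k),
      coeff m F * ∏ j : Fin N, y j ^ (m (Fin.castSucc j)) := by
  rw [Pb, Polynomial.finset_sum_coeff, Finset.sum_filter]
  refine Finset.sum_congr rfl fun m _ => ?_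
  rw [Polynomial.coeff_C_mul, Polynomial.coeff_X_pow]
  split_ifs <;> simp_all

lemma Pb_natDegree (N t : ℕ) (F : MvPolynomial (Fin (N+1)) ℂ) (hF : F.IsHomogeneous t)
    (y : Fin N → ℂ) : (Pb N F y).natDegree ≤ t := by
  refine Polynomial.natDegree_sum_le_of_forall_le _ _ fun m hm => ?_
  refine le_trans (Polynomial.natDegree_mul_le) ?_
  rw [Polynomial.natDegree_C, Polynomial.natDegree_X_pow, zero_add]
  have h1 := hF (mem_support_iff.mp hm)
  have h2 : ∑ j, m j = t := by
    rw [← h1, Finsupp.weight_apply, Finsupp.sum_fintype] <;> simp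
  calc m (Fin.last N) ≤ ∑ j, m j := Finset.single_le_sum (fun i _ => Nat.zero_le _) (Finset.mem_univ _)
    _ = t := h2

lemma sum_eq_t (N t : ℕ) (F : MvPolynomial (Fin (N+1)) ℂ) (hF : F.IsHomogeneous t)
    (m : Fin (N+1) →₀ ℕ) (hm : m ∈ F.support) : ∑ j, m j = t := by
  have h1 := hF (mem_support_iff.mp hm)
  rw [← h1, Finsupp.weight_apply, Finsupp.sum_fintype] <;> simp

lemma evalSmul (n t : ℕ) (F : MvPolynomial (Fin n) ℂ) (hF : F.IsHomogeneous t) (c : ℂ)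
    (x : Fin n → ℂ) : eval (c • x) F = c ^ t * eval x F := by
  rw [eval_eq', eval_eq', Finset.mul_sum]
  refine Finset.sum_congr rfl fun m hm => ?_
  have h2 : ∑ j, m j = t := by
    have h1 := hF (mem_support_iff.mp hm)
    rw [← h1, Finsupp.weight_apply, Finsupp.sum_fintype] <;> simp
  have : ∏ j, (c • x) j ^ m j = c ^ t * ∏ j, x j ^ m j := by
    simp only [Pi.smul_apply, smul_eq_mul, mul_pow]
    rw [Finset.prod_mul_distrib, Finset.prod_pow_eq_pow_sum, h2]
  rw [this]
  ring

lemma cardBound (d t : ℕ) (S : Finset (Fin d →₀ ℕ)) (h : ∀ m ∈ S, ∀ j, m j ≤ t) :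
    S.card ≤ (t+1)^d := by
  classical
  have key : S.card ≤ (Finset.univ : Finset (Fin d → Fin (t+1))).card := by
    refine Finset.card_le_card_of_injOn (fun (m : Fin d →₀ ℕ) (j : Fin d) =>
        (⟨m j % (t+1), Nat.mod_lt _ (by omega)⟩ : Fin (t+1))) (fun m _ => Finset.mem_univ _) ?_
    intro m1 h1 m2 h2 heq
    ext j
    have := congrFun heq j
    have e1 : m1 j % (t+1) = m2 j % (t+1) := congrArg Fin.val this
    have b1 : m1 j ≤ t := h m1 h1 j
    have b2 : m2 j ≤ t := h m2 h2 j
    rwa [Nat.mod_eq_of_lt (by omega), Nat.mod_eq_of_lt (by omega)] at e1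
  calc S.card ≤ _ := key
    _ = (t+1)^d := by rw [Finset.card_univ, Fintype.card_fun, Fintype.card_fin, Fintype.card_fin]

lemma lamNorm {α : Type*} [DecidableEq α] [Zero α] (S : Finset (α →₀ ℕ)) (j₀ : α)
    (f : (α →₀ ℕ) → ℝ) (hne : (S.filter (fun m => 0 < m j₀)).Nonempty) :
    (⨆ m, ⨆ (_ : m ∈ S), ⨆ (_ : 0 < m j₀), f m)
      = max 0 ((S.filter (fun m => 0 < m j₀)).sup' hne f) := by
  classical
  set S' := S.filter (fun m => 0 < m j₀) with hS'
  set B : ℝ := max 0 (S'.sup' hne f) with hB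
  set g : (α →₀ ℕ) → ℝ := fun m => ⨆ (_ : m ∈ S), ⨆ (_ : 0 < m j₀), f m with hg
  have hg1 : ∀ m, m ∈ S → 0 < m j₀ → g m = f m := by
    intro m h1 h2
    rw [hg]
    simp only
    rw [ciSup_pos h1, ciSup_pos h2]
  have hzero : ∀ (p : Prop), (⨆ (_ : p), (0:ℝ)) = 0 := by
    intro p
    by_cases hp : p
    · rw [ciSup_pos hp]
    · haveI : IsEmpty p := ⟨hp⟩
      exact Real.iSup_of_isEmpty _
  have hg0 : ∀ m, ¬(m ∈ S ∧ 0 < m j₀) → g m = 0 := by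
    intro m hm
    rw [hg]
    simp only
    by_cases h1 : m ∈ S
    · have h2 : ¬ (0 < m j₀) := fun h => hm ⟨h1, h⟩
      haveI : IsEmpty (0 < m j₀) := ⟨h2⟩
      rw [show (fun (_ : m ∈ S) => ⨆ (_ : 0 < m j₀), f m) = fun (_ : m ∈ S) => (0:ℝ) by
        funext; exact Real.iSup_of_isEmpty _]
      exact hzero _
    · haveI : IsEmpty (m ∈ S) := ⟨h1⟩
      exact Real.iSup_of_isEmpty _
  have hBle : ∀ m, g m ≤ B := by
    intro m
    by_cases hm : m ∈ S ∧ 0 < m j₀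
    · rw [hg1 m hm.1 hm.2]
      exact le_trans (Finset.le_sup' f (Finset.mem_filter.mpr hm)) (le_max_right _ _)
    · rw [hg0 m hm]
      exact le_max_left _ _
  have hbdd : BddAbove (Set.range g) := ⟨B, by rintro x ⟨m, rfl⟩; exact hBle m⟩
  refine le_antisymm (Real.iSup_le hBle (le_max_left _ _)) (max_le ?_ ?_)
  · have h0 : g 0 = 0 := hg0 0 (by simp)
    calc (0:ℝ) = g 0 := h0.symm
      _ ≤ _ := le_ciSup hbdd 0
  · refine Finset.sup'_le hne f fun m hm => ?_
    rw [Finset.mem_filter] at hm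
    calc f m = g m := (hg1 m hm.1 hm.2).symm
      _ ≤ _ := le_ciSup hbdd m

lemma evalSnoc (N : ℕ) (y : Fin N → ℂ) (F : MvPolynomial (Fin (N+1)) ℂ) :
    aeval y (aeval (fun j : Fin (N + 1) =>
      if h : (j : ℕ) < N then (X ⟨(j : ℕ), h⟩ : MvPolynomial (Fin N) ℂ) else 0) F)
    = eval (Fin.snoc y 0) F := by
  rw [comp_aeval_apply]
  have hfun : (fun i : Fin (N+1) => aeval y (if h : ((i:ℕ) < N) then
      (X (⟨(i:ℕ), h⟩ : Fin N) : MvPolynomial (Fin N) ℂ) else 0)) = (Fin.snoc y (0:ℂ)) := by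
    funext i
    by_cases h : (i:ℕ) < N
    · rw [dif_pos h, aeval_X]
      simp only [Fin.snoc, h, dif_pos]
      rfl
    · rw [dif_neg h, map_zero]
      simp [Fin.snoc, h]
  rw [hfun]
  rw [aeval_def, Algebra.algebraMap_self]
  rfl


set_option maxHeartbeats 1000000 in
/-- For all `N ≥ 1`, `t ≥ 1` there is a constant `c = c(N,t)` such
that for every homogeneous form `F = ∑_I b_I x^I` of degree `t` over `ℂ` with
`F(x_0,…,x_{N-1},0) = ∏ x_i^{e_i}` and some `b_I ≠ 0` with `I_N > 0`, the zero locus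
`Z` of `F` satisfies `|λ(Z) − log⁺ max{|b_I|^{1/I_N} : I_N > 0}| ≤ c`. -/
theorem stmt17 (N : ℕ) (hN : 1 ≤ N) (t : ℕ) (ht : 1 ≤ t) :
    ∃ c : ℝ, ∀ (F : MvPolynomial (Fin (N + 1)) ℂ) (e : Fin N → ℕ),
      F.IsHomogeneous t →
      (aeval (fun j : Fin (N + 1) =>
          if h : (j : ℕ) < N then (X ⟨(j : ℕ), h⟩ : MvPolynomial (Fin N) ℂ) else 0) F =
        ∏ i : Fin N, X i ^ e i) →
      (∃ m ∈ F.support, 0 < m (Fin.last N)) →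
      lam N (NormedField.toAbsoluteValue ℂ) {P | ∃ (x : Fin (N + 1) → ℂ) (hx : x ≠ 0),
          eval x F = 0 ∧ P = Projectivization.mk ℂ x hx} ≠ ⊤ ∧
      |(lam N (NormedField.toAbsoluteValue ℂ) {P | ∃ (x : Fin (N + 1) → ℂ) (hx : x ≠ 0),
            eval x F = 0 ∧ P = Projectivization.mk ℂ x hx}).toReal -
        max 0 (⨆ (m : Fin (N + 1) →₀ ℕ) (_ : m ∈ F.support) (_ : 0 < m (Fin.last N)),
          Real.log ‖MvPolynomial.coeff m F‖ / (m (Fin.last N) : ℝ))| ≤ c := by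
  show ∃ c : ℝ, ∀ (F : MvPolynomial (Fin (N + 1)) ℂ) (e : Fin N → ℕ),
      F.IsHomogeneous t →
      (aeval (fun j : Fin (N + 1) =>
          if h : (j : ℕ) < N then (X ⟨(j : ℕ), h⟩ : MvPolynomial (Fin N) ℂ) else 0) F =
        ∏ i : Fin N, X i ^ e i) →
      (∃ m ∈ F.support, 0 < m (Fin.last N)) →
        lam N Complex.abs {P | ∃ (x : Fin (N + 1) → ℂ) (hx : x ≠ 0),
          eval x F = 0 ∧ P = Projectivization.mk ℂ x hx} ≠ ⊤ ∧
      |(lam N Complex.abs {P | ∃ (x : Fin (N + 1) → ℂ) (hx : x ≠ 0),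
            eval x F = 0 ∧ P = Projectivization.mk ℂ x hx}).toReal -
        max 0 (⨆ (m : Fin (N + 1) →₀ ℕ) (_ : m ∈ F.support) (_ : 0 < m (Fin.last N)),
          Real.log (Complex.abs (MvPolynomial.coeff m F)) / (m (Fin.last N) : ℝ))| ≤ c
  classical
  set c₁ : ℝ := ((N:ℝ)+1) * Real.log ((t:ℝ)+1) with hc₁def
  set c₂ : ℝ := ((t:ℝ)+1) * Real.log 2 with hc₂def
  have hlogt : Real.log 2 ≤ Real.log ((t:ℝ)+1) := by
    apply Real.log_le_log (by norm_num)
    have : (1:ℝ) ≤ (t:ℝ) := by exact_mod_cast ht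
    linarith
  have hlog2pos : (0:ℝ) ≤ Real.log 2 := Real.log_nonneg (by norm_num)
  have hc₁0 : 0 ≤ c₁ := by
    have h1 : (0:ℝ) ≤ (N:ℝ) := Nat.cast_nonneg N
    nlinarith
  have hc₂0 : 0 ≤ c₂ := by positivity
  have hlog2c₁ : Real.log 2 ≤ c₁ := by
    have h1 : (0:ℝ) ≤ (N:ℝ) := Nat.cast_nonneg N
    nlinarith
  refine ⟨c₁ + c₂, ?_⟩
  intro F e hF hA hex
  set Z : Set (Projectivization ℂ (Fin (N + 1) → ℂ)) :=
    {P | ∃ (x : Fin (N + 1) → ℂ) (hx : x ≠ 0),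
        eval x F = 0 ∧ P = Projectivization.mk ℂ x hx} with hZdef
  have hft : ∀ m ∈ F.support, ∑ j, m j = t := fun m hm => sum_eq_t N t F hF m hm
  have hmle : ∀ m ∈ F.support, ∀ j, m j ≤ t := by
    intro m hm j
    calc m j ≤ ∑ i, m i :=
          Finset.single_le_sum (fun i _ => Nat.zero_le _) (Finset.mem_univ j)
      _ = t := hft m hm
  set S' : Finset (Fin (N+1) →₀ ℕ) := F.support.filter (fun m => 0 < m (Fin.last N)) with hS'def
  have hne : S'.Nonempty := by
    obtain ⟨m, hm, hp⟩ := hex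
    exact ⟨m, Finset.mem_filter.mpr ⟨hm, hp⟩⟩
  set f : (Fin (N+1) →₀ ℕ) → ℝ :=
    fun m => Real.log (Complex.abs (MvPolynomial.coeff m F)) / (m (Fin.last N) : ℝ) with hfdef
  set Λ : ℝ := max 0 (S'.sup' hne f) with hΛdef
  have hΛ0 : 0 ≤ Λ := le_max_left _ _
  have hstmt : max 0 (⨆ (m : Fin (N + 1) →₀ ℕ) (_ : m ∈ F.support) (_ : 0 < m (Fin.last N)),
      Real.log (Complex.abs (MvPolynomial.coeff m F)) / (m (Fin.last N) : ℝ)) = Λ := by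
    rw [lamNorm F.support (Fin.last N) f hne]
    rw [hΛdef, ← max_assoc, max_self]
  have hfΛ : ∀ m ∈ S', f m ≤ Λ := fun m hm =>
    le_trans (Finset.le_sup' f hm) (le_max_right _ _)
  have hbm : ∀ m ∈ S', Complex.abs (coeff m F) ≤ Real.exp Λ ^ (m (Fin.last N)) := by
    intro m hm
    have hmS : m ∈ F.support := (Finset.mem_filter.mp hm).1
    have hmk : 0 < m (Fin.last N) := (Finset.mem_filter.mp hm).2
    have hpos : 0 < Complex.abs (coeff m F) :=
      AbsoluteValue.pos _ (mem_support_iff.mp hmS)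
    have hkpos : (0:ℝ) < (m (Fin.last N) : ℝ) := by exact_mod_cast hmk
    have hlog : Real.log (Complex.abs (coeff m F)) ≤ (m (Fin.last N) : ℝ) * Λ := by
      have := hfΛ m hm
      rw [hfdef] at this
      rw [div_le_iff₀ hkpos] at this
      linarith
    calc Complex.abs (coeff m F) = Real.exp (Real.log (Complex.abs (coeff m F))) :=
        (Real.exp_log hpos).symm
      _ ≤ Real.exp ((m (Fin.last N) : ℝ) * Λ) := Real.exp_le_exp.mpr hlog
      _ = Real.exp Λ ^ (m (Fin.last N)) := by rw [← Real.exp_nat_mul]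
  -- coefficient 0 of the restricted polynomial
  have hP0 : ∀ y : Fin N → ℂ, (Pb N F y).coeff 0 = ∏ i, y i ^ e i := by
    intro y
    calc (Pb N F y).coeff 0 = (Pb N F y).eval 0 := Polynomial.coeff_zero_eq_eval_zero _
      _ = eval (Fin.snoc y (0:ℂ)) F := Pb_eval N F y 0
      _ = aeval y (aeval (fun j : Fin (N + 1) =>
            if h : (j : ℕ) < N then (X ⟨(j : ℕ), h⟩ : MvPolynomial (Fin N) ℂ) else 0) F) :=
          (evalSnoc N y F).symm
      _ = aeval y (∏ i : Fin N, X i ^ e i) := by rw [hA]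
      _ = ∏ i, y i ^ e i := by
          rw [map_prod]
          exact Finset.prod_congr rfl fun i _ => by rw [map_pow, aeval_X]
  have habs1 : ∀ y : Fin N → ℂ, (∀ j, Complex.abs (y j) = 1) →
      Complex.abs ((Pb N F y).coeff 0) = 1 := by
    intro y hy
    rw [hP0 y, map_prod]
    exact Finset.prod_eq_one fun i _ => by rw [map_pow, hy, one_pow]
  -- key inequality from a root on the unit torus
  have hkey : ∀ (y : Fin N → ℂ) (z : ℂ), (∀ j, Complex.abs (y j) = 1) →
      (Pb N F y).eval z = 0 →
      (1:ℝ) ≤ ∑ m ∈ S', Complex.abs (coeff m F) * Complex.abs z ^ (m (Fin.last N)) := by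
    intro y z hy hz
    have hsum : ∑ m ∈ F.support,
        (coeff m F * ∏ j, y j ^ (m (Fin.castSucc j))) * z ^ (m (Fin.last N)) = 0 := by
      rw [Pb, Polynomial.eval_finset_sum] at hz
      rw [← hz]
      refine Finset.sum_congr rfl fun m _ => ?_
      rw [Polynomial.eval_mul, Polynomial.eval_C, Polynomial.eval_pow, Polynomial.eval_X]
    rw [← Finset.sum_filter_add_sum_filter_not F.support (fun m => m (Fin.last N) = 0)] at hsum
    have hfirst : ∑ m ∈ F.support.filter (fun m => m (Fin.last N) = 0),
        (coeff m F * ∏ j, y j ^ (m (Fin.castSucc j))) * z ^ (m (Fin.last N))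
        = (Pb N F y).coeff 0 := by
      rw [Pb_coeff]
      refine Finset.sum_congr rfl fun m hm => ?_
      rw [(Finset.mem_filter.mp hm).2, pow_zero, mul_one]
    have hS'eq : F.support.filter (fun m => ¬ m (Fin.last N) = 0) = S' := by
      rw [hS'def]
      exact Finset.filter_congr (fun m _ => by simp [Nat.pos_iff_ne_zero])
    rw [hfirst, hS'eq] at hsum
    have h2 : (Pb N F y).coeff 0 =
        - ∑ m ∈ S', (coeff m F * ∏ j, y j ^ (m (Fin.castSucc j))) * z ^ (m (Fin.last N)) :=
      eq_neg_of_add_eq_zero_left hsum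
    calc (1:ℝ) = Complex.abs ((Pb N F y).coeff 0) := (habs1 y hy).symm
      _ = Complex.abs (∑ m ∈ S',
          (coeff m F * ∏ j, y j ^ (m (Fin.castSucc j))) * z ^ (m (Fin.last N))) := by
          rw [h2, AbsoluteValue.map_neg]
      _ ≤ ∑ m ∈ S', Complex.abs
          ((coeff m F * ∏ j, y j ^ (m (Fin.castSucc j))) * z ^ (m (Fin.last N))) :=
          Complex.abs.sum_le _ _
      _ = ∑ m ∈ S', Complex.abs (coeff m F) * Complex.abs z ^ (m (Fin.last N)) := by
          refine Finset.sum_congr rfl fun m hm => ?_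
          rw [map_mul, map_mul, map_pow]
          have : Complex.abs (∏ j, y j ^ (m (Fin.castSucc j))) = 1 := by
            rw [map_prod]
            exact Finset.prod_eq_one fun i _ => by rw [map_pow, hy, one_pow]
          rw [this, mul_one]
  -- upper bound
  have hUpper : lam N Complex.abs Z ≤ ENNReal.ofReal (c₁ + Λ) := by
    rw [lam]
    refine iSup_le fun β => iSup_le fun hβ => iSup_le fun hunit => iSup_le fun hlast =>
      iSup_le fun hmem => ?_
    obtain ⟨x, hx, hevalx, heq⟩ := hmem
    obtain ⟨a, ha⟩ := (Projectivization.mk_eq_mk_iff ℂ β x hβ hx).mp heq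
    have hevalβ : eval β F = 0 := by
      rw [← ha, show (a • x : Fin (N+1) → ℂ) = (a : ℂ) • x from funext fun j => by
        simp [Units.smul_def], evalSmul (N+1) t F hF, hevalx, mul_zero]
    set y : Fin N → ℂ := fun j => β (Fin.castSucc j) with hydef
    set z : ℂ := β (Fin.last N) with hzdef
    have hsnoc : (Fin.snoc y z : Fin (N+1) → ℂ) = β := by
      funext i
      refine Fin.lastCases ?_ ?_ i
      · rw [Fin.snoc_last]
      · intro i; rw [Fin.snoc_castSucc]
    have hroot : (Pb N F y).eval z = 0 := by rw [Pb_eval, hsnoc, hevalβ]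
    have hzpos : 0 < Complex.abs z := AbsoluteValue.pos Complex.abs hlast
    have hkey1 := hkey y z hunit hroot
    set M : ℝ := Real.exp Λ with hMdef
    have hMpos : 0 < M := Real.exp_pos Λ
    have hM1 : 1 ≤ M := by
      calc (1:ℝ) = Real.exp 0 := Real.exp_zero.symm
        _ ≤ M := Real.exp_le_exp.mpr hΛ0
    have hgoal : Real.log ((Complex.abs z)⁻¹) ≤ c₁ + Λ := by
      rw [Real.log_inv]
      by_cases hu : 1/2 ≤ M * Complex.abs z
      · have h2 : (2 * M)⁻¹ ≤ Complex.abs z := by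
          rw [inv_eq_one_div, div_le_iff₀ (by positivity)]
          nlinarith
        have h3 : Real.log ((2*M)⁻¹) ≤ Real.log (Complex.abs z) :=
          Real.log_le_log (by positivity) h2
        rw [Real.log_inv, Real.log_mul two_ne_zero (ne_of_gt hMpos), Real.log_exp] at h3
        linarith
      · push_neg at hu
        have hterm : ∀ m ∈ S', Complex.abs (coeff m F) * Complex.abs z ^ (m (Fin.last N))
            ≤ M * Complex.abs z := by
          intro m hm
          have h1 : Complex.abs (coeff m F) * Complex.abs z ^ (m (Fin.last N))
              ≤ (M * Complex.abs z) ^ (m (Fin.last N)) := by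
            rw [mul_pow]
            exact mul_le_mul_of_nonneg_right (hbm m hm) (by positivity)
          refine h1.trans (pow_le_of_le_one (by positivity) (by linarith) ?_)
          exact Nat.pos_iff_ne_zero.mp (Finset.mem_filter.mp hm).2
        have hsum2 : (1:ℝ) ≤ S'.card * (M * Complex.abs z) := by
          calc (1:ℝ) ≤ ∑ m ∈ S', Complex.abs (coeff m F) * Complex.abs z ^ (m (Fin.last N)) :=
              hkey1
            _ ≤ ∑ _m ∈ S', M * Complex.abs z := Finset.sum_le_sum hterm
            _ = S'.card * (M * Complex.abs z) := by rw [Finset.sum_const, nsmul_eq_mul]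
        have hcard : (S'.card : ℝ) ≤ ((t:ℝ)+1)^(N+1) := by
          have h4 := cardBound (N+1) t S' (fun m hm j => hmle m (Finset.mem_filter.mp hm).1 j)
          calc (S'.card : ℝ) ≤ (((t+1)^(N+1) : ℕ) : ℝ) := by exact_mod_cast h4
            _ = ((t:ℝ)+1)^(N+1) := by push_cast; ring
        have hcardpos : (0:ℝ) < (S'.card : ℝ) := by
          exact_mod_cast Finset.card_pos.mpr hne
        have h5 : (((t:ℝ)+1)^(N+1) * M)⁻¹ ≤ Complex.abs z := by
          rw [inv_eq_one_div, div_le_iff₀ (by positivity)]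
          nlinarith
        have h6 : Real.log ((((t:ℝ)+1)^(N+1) * M)⁻¹) ≤ Real.log (Complex.abs z) :=
          Real.log_le_log (by positivity) h5
        rw [Real.log_inv, Real.log_mul (by positivity) (ne_of_gt hMpos), Real.log_exp,
          Real.log_pow] at h6
        have hcast : ((N+1 : ℕ) : ℝ) = (N:ℝ) + 1 := by push_cast; ring
        rw [hcast] at h6
        linarith
    exact ENNReal.ofReal_le_ofReal hgoal
  have hnetop : lam N Complex.abs Z ≠ ⊤ := (hUpper.trans_lt ENNReal.ofReal_lt_top).ne
  have hup : (lam N Complex.abs Z).toReal ≤ c₁ + Λ := by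
    have h1 := ENNReal.toReal_mono ENNReal.ofReal_ne_top hUpper
    rwa [ENNReal.toReal_ofReal (by linarith)] at h1
  -- lower bound
  have hlo : Λ - c₂ ≤ (lam N Complex.abs Z).toReal := by
    by_cases hcase : S'.sup' hne f ≤ 0
    · have hΛeq : Λ = 0 := max_eq_left hcase
      have := ENNReal.toReal_nonneg (a := lam N Complex.abs Z)
      linarith
    · push_neg at hcase
      have hΛeq : Λ = S'.sup' hne f := max_eq_right hcase.le
      obtain ⟨m₀, hm₀, hsup⟩ := Finset.exists_mem_eq_sup' hne f
      have hm₀S : m₀ ∈ F.support := (Finset.mem_filter.mp hm₀).1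
      have hm₀pos : 0 < m₀ (Fin.last N) := (Finset.mem_filter.mp hm₀).2
      have hkR : (0:ℝ) < (m₀ (Fin.last N) : ℝ) := by exact_mod_cast hm₀pos
      have hb0pos : 0 < Complex.abs (coeff m₀ F) :=
        AbsoluteValue.pos _ (mem_support_iff.mp hm₀S)
      have hfm₀ : f m₀ = Λ := by rw [hΛeq, hsup]
      have hb0 : Complex.abs (coeff m₀ F) = Real.exp ((m₀ (Fin.last N) : ℝ) * Λ) := by
        have hlogb : Real.log (Complex.abs (coeff m₀ F)) = (m₀ (Fin.last N) : ℝ) * Λ := by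
          rw [← hfm₀, hfdef]
          field_simp
        rw [← hlogb, Real.exp_log hb0pos]
      -- choose the torus point
      set T : Finset (Fin (N+1) →₀ ℕ) :=
        F.support.filter (fun m => m (Fin.last N) = m₀ (Fin.last N)) with hTdef
      have hinj : Set.InjOn (fun (m : Fin (N+1) →₀ ℕ) (j : Fin N) => m (Fin.castSucc j)) (T : Set (Fin (N+1) →₀ ℕ)) := by
        intro m1 h1 m2 h2 h12
        have hm1 := Finset.mem_filter.mp (Finset.mem_coe.mp h1)
        have hm2 := Finset.mem_filter.mp (Finset.mem_coe.mp h2)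
        ext i
        refine Fin.lastCases ?_ ?_ i
        · rw [hm1.2, hm2.2]
        · intro i
          exact congrFun h12 i
      obtain ⟨y, hy, hyge⟩ := exists_unit_point N t T (fun m (j : Fin N) => m (Fin.castSucc j))
        (fun m hm j => hmle m (Finset.mem_filter.mp hm).1 (Fin.castSucc j)) hinj (fun m => coeff m F) m₀
        (Finset.mem_filter.mpr ⟨hm₀S, rfl⟩)
      set A : ℝ := Complex.abs ((Pb N F y).coeff (m₀ (Fin.last N))) with hAdef
      have hAge : Real.exp ((m₀ (Fin.last N) : ℝ) * Λ) ≤ A := by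
        rw [hAdef, Pb_coeff, ← hb0]
        exact hyge
      have hApos : 0 < A := lt_of_lt_of_le (Real.exp_pos _) hAge
      have hPb0 : Pb N F y ≠ 0 := by
        intro h
        rw [hAdef, h, Polynomial.coeff_zero, map_zero] at hApos
        exact lt_irrefl _ hApos
      set ρ : ℝ := ((2:ℝ)^(t+1) / A) ^ ((m₀ (Fin.last N) : ℝ)⁻¹) with hρdef
      have hbase : (0:ℝ) < (2:ℝ)^(t+1) / A := by positivity
      have hρpos : 0 < ρ := Real.rpow_pos_of_pos hbase _
      have hρpow : ρ ^ (m₀ (Fin.last N)) = (2:ℝ)^(t+1) / A := by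
        rw [hρdef, ← Real.rpow_natCast (((2:ℝ)^(t+1) / A) ^ ((m₀ (Fin.last N) : ℝ)⁻¹))
          (m₀ (Fin.last N)), ← Real.rpow_mul hbase.le,
          inv_mul_cancel₀ (ne_of_gt hkR), Real.rpow_one]
      have hroot : ∃ z, (Pb N F y).eval z = 0 ∧ Complex.abs z < ρ := by
        by_contra hcon
        push_neg at hcon
        have hlem := lemA (Pb N F y).natDegree (Pb N F y) hPb0 rfl ρ hρpos.le
          (fun z hz => hcon z hz) (m₀ (Fin.last N))
        rw [habs1 y hy, mul_one] at hlem
        rw [hρpow] at hlem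
        have hAρ : A * ((2:ℝ)^(t+1) / A) = (2:ℝ)^(t+1) := by field_simp
        rw [hAρ] at hlem
        have h8 : (((Pb N F y).natDegree.choose (m₀ (Fin.last N)) : ℕ) : ℝ) ≤ (2:ℝ)^t := by
          calc (((Pb N F y).natDegree.choose (m₀ (Fin.last N)) : ℕ) : ℝ)
              ≤ ((2^((Pb N F y).natDegree) : ℕ) : ℝ) := by exact_mod_cast chooseLe _ _
            _ ≤ ((2^t : ℕ) : ℝ) := by
                have := Pb_natDegree N t F hF y
                exact_mod_cast Nat.pow_le_pow_right (by norm_num) this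
            _ = (2:ℝ)^t := by push_cast; ring
        have h9 : (2:ℝ)^(t+1) = 2 * (2:ℝ)^t := by ring
        have h10 : (0:ℝ) < (2:ℝ)^t := by positivity
        linarith
      obtain ⟨z, hz0, hzρ⟩ := hroot
      have hzne : z ≠ 0 := by
        intro h
        rw [h, ← Polynomial.coeff_zero_eq_eval_zero] at hz0
        have := habs1 y hy
        rw [hz0, map_zero] at this
        norm_num at this
      have hzpos : 0 < Complex.abs z := AbsoluteValue.pos Complex.abs hzne
      -- the witness
      have hβne : (Fin.snoc y z : Fin (N+1) → ℂ) ≠ 0 := by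
        intro h
        have h1 := congrFun h (Fin.castSucc ⟨0, hN⟩)
        rw [Fin.snoc_castSucc] at h1
        have h2 := hy ⟨0, hN⟩
        rw [h1] at h2
        norm_num at h2
      have hmemZ : Projectivization.mk ℂ (Fin.snoc y z : Fin (N+1) → ℂ) hβne ∈ Z := by
        refine ⟨Fin.snoc y z, hβne, ?_, rfl⟩
        rw [← Pb_eval N F y z]
        exact hz0
      have hcond1 : ∀ j : Fin N,
          Complex.abs ((Fin.snoc y z : Fin (N+1) → ℂ) (Fin.castSucc j)) = 1 := by
        intro j
        rw [Fin.snoc_castSucc]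
        exact hy j
      have hcond2 : (Fin.snoc y z : Fin (N+1) → ℂ) (Fin.last N) ≠ 0 := by
        rw [Fin.snoc_last]
        exact hzne
      have hge : ENNReal.ofReal (Real.log ((Complex.abs z)⁻¹)) ≤ lam N Complex.abs Z := by
        rw [lam]
        refine le_trans ?_ (le_iSup _ (Fin.snoc y z : Fin (N+1) → ℂ))
        refine le_trans ?_ (le_iSup _ hβne)
        refine le_trans ?_ (le_iSup _ hcond1)
        refine le_trans ?_ (le_iSup _ hcond2)
        refine le_trans ?_ (le_iSup _ hmemZ)
        rw [Fin.snoc_last]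
      -- numeric bound
      have hlogz : Λ - c₂ ≤ Real.log ((Complex.abs z)⁻¹) := by
        have h1 : Real.log (Complex.abs z) ≤ Real.log ρ := Real.log_le_log hzpos hzρ.le
        have h2 : Real.log ρ =
            -((m₀ (Fin.last N) : ℝ)⁻¹ * (Real.log A - ((t:ℝ)+1) * Real.log 2)) := by
          rw [hρdef, Real.log_rpow hbase, Real.log_div (by positivity) (ne_of_gt hApos),
            Real.log_pow]
          push_cast
          ring
        have h3 : (m₀ (Fin.last N) : ℝ) * Λ ≤ Real.log A := by
          calc (m₀ (Fin.last N) : ℝ) * Λ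
              = Real.log (Real.exp ((m₀ (Fin.last N) : ℝ) * Λ)) := (Real.log_exp _).symm
            _ ≤ Real.log A := Real.log_le_log (Real.exp_pos _) hAge
        have hk1 : (1:ℝ) ≤ (m₀ (Fin.last N) : ℝ) := by exact_mod_cast hm₀pos
        have h5 : (m₀ (Fin.last N) : ℝ) * (Λ - c₂) ≤ Real.log A - c₂ := by nlinarith
        have h4 : Λ - c₂ ≤ (m₀ (Fin.last N) : ℝ)⁻¹ * (Real.log A - ((t:ℝ)+1) * Real.log 2) := by
          rw [← hc₂def]
          calc Λ - c₂ = (m₀ (Fin.last N) : ℝ)⁻¹ * ((m₀ (Fin.last N) : ℝ) * (Λ - c₂)) := by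
                field_simp
            _ ≤ (m₀ (Fin.last N) : ℝ)⁻¹ * (Real.log A - c₂) :=
                mul_le_mul_of_nonneg_left h5 (by positivity)
        rw [Real.log_inv]
        linarith
      rcases le_or_gt (Real.log ((Complex.abs z)⁻¹)) 0 with hneg | hpos'
      · have := ENNReal.toReal_nonneg (a := lam N Complex.abs Z)
        linarith
      · have h6 := ENNReal.toReal_mono hnetop hge
        rw [ENNReal.toReal_ofReal hpos'.le] at h6
        linarith
  refine ⟨hnetop, ?_⟩
  rw [hstmt]
  rw [abs_le]
  constructor
  · linarith
  · linarith
end
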